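/- arXiv:1009.1438 — 2 statements merged into one kernel-verified Lean document; each statement's English description precedes it below -/
import Mathlib

section
/- Let G be a finite connected graph with unit resistances on the edges, and let x, y be two vertices with effective resistance R = R_eff(x ↔ y). Then for any ε > 0, the simple random walk started at x satisfies P_x(τ_y ≤ ε R²) ≤ ε. -/
open scoped BigOperators

namespace RW

attribute [local instance] Classical.propDecidable

variable {V : Type*}

/-- Degree of a vertex (as a natural number, via `Nat.card`). -/
noncomputable def deg (G : SimpleGraph V) (x : V) : ℕ := Nat.card (G.neighborSet x)

/-- Local finiteness of a graph. -/
def LocFin (G : SimpleGraph V) : Prop := ∀ x, (G.neighborSet x).Finite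

/-- Probability of the simple random walk following the trajectory `p`. -/
noncomputable def pathProb (G : SimpleGraph V) {t : ℕ} (p : Fin (t + 1) → V) : ℝ :=
  if ∀ i : Fin t, G.Adj (p i.castSucc) (p i.succ)
  then ∏ i : Fin t, ((deg G (p i.castSucc) : ℝ))⁻¹ else 0

/-- `hitProb G u v t` is the probability that the simple random walk started at `u`
hits `v` for the first time (at a time `≥ 1`) exactly at time `t`. -/
noncomputable def hitProb (G : SimpleGraph V) (u v : V) (t : ℕ) : ℝ :=
  ∑' p : Fin (t + 1) → V,
    if p 0 = u ∧ p (Fin.last t) = v ∧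
        (∀ i : Fin (t + 1), i ≠ 0 → i ≠ Fin.last t → p i ≠ v)
    then pathProb G p else 0

/-- `survProb G u v t` is the probability that the walk started at `u` has not
hit `v` before time `t`, i.e. `P_u(τ_v ≥ t)` (for `t ≥ 1`). -/
noncomputable def survProb (G : SimpleGraph V) (u v : V) (t : ℕ) : ℝ :=
  1 - ∑ s ∈ Finset.Ico 1 t, hitProb G u v s
/-- Dirichlet energy of a function on a finite graph with unit resistances. -/
noncomputable def energy {V : Type} [Fintype V] (G : SimpleGraph V) (f : V → ℝ) : ℝ :=
  (1 / 2) * ∑ u, ∑ w, if G.Adj u w then (f u - f w) ^ 2 else 0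

/-- Effective conductance between `x` and `y` (Dirichlet variational principle). -/
noncomputable def effCond {V : Type} [Fintype V] (G : SimpleGraph V) (x y : V) : ℝ :=
  sInf {e : ℝ | ∃ f : V → ℝ, f x = 0 ∧ f y = 1 ∧ e = energy G f}

/-- Effective resistance between `x` and `y`. -/
noncomputable def effRes {V : Type} [Fintype V] (G : SimpleGraph V) (x y : V) : ℝ :=
  (effCond G x y)⁻¹
section Aux
variable {V : Type} [Fintype V]

lemma deg_pos (G : SimpleGraph V) (hconn : G.Connected) {a b : V} (hab : a ≠ b) (v : V) :
    0 < deg G v := by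
  obtain ⟨w, hw⟩ : ∃ w, w ≠ v := by
    rcases eq_or_ne a v with rfl | h
    · exact ⟨b, fun hh => hab hh.symm⟩
    · exact ⟨a, h⟩
  obtain ⟨p⟩ := hconn.preconnected v w
  cases p with
  | nil => exact (hw rfl).elim
  | cons hadj q =>
    have : Nonempty (G.neighborSet v) := ⟨⟨_, hadj⟩⟩
    exact Nat.card_pos

lemma deg_cast (G : SimpleGraph V) (v : V) :
    ((deg G v : ℝ)) = ∑ w, (if G.Adj v w then (1:ℝ) else 0) := by
  classical
  rw [Finset.sum_boole]
  norm_cast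
  rw [deg, Nat.card_coe_set_eq, Set.ncard_eq_toFinset_card']
  congr 1
  ext w
  simp [SimpleGraph.neighborSet]
  exact Set.mem_toFinset

lemma energy_nonneg (G : SimpleGraph V) (f : V → ℝ) : 0 ≤ energy G f := by
  unfold energy
  have : (0:ℝ) ≤ ∑ u, ∑ w, if G.Adj u w then (f u - f w) ^ 2 else 0 := by
    apply Finset.sum_nonneg; intro u _
    apply Finset.sum_nonneg; intro w _
    positivity
  linarith

lemma adj_diff_sq_le (G : SimpleGraph V) (f : V → ℝ) {u w : V} (h : G.Adj u w) :
    (f u - f w) ^ 2 ≤ 2 * energy G f := by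
  have h1 : (f u - f w) ^ 2 ≤ ∑ w', if G.Adj u w' then (f u - f w') ^ 2 else 0 := by
    have := Finset.single_le_sum (f := fun w' => if G.Adj u w' then (f u - f w') ^ 2 else 0)
      (s := Finset.univ) (fun i _ => by positivity) (Finset.mem_univ w)
    simpa [h] using this
  have h2 : (∑ w', if G.Adj u w' then (f u - f w') ^ 2 else 0) ≤
      ∑ u', ∑ w', if G.Adj u' w' then (f u' - f w') ^ 2 else 0 := by
    apply Finset.single_le_sum (f := fun u' => ∑ w', if G.Adj u' w' then (f u' - f w') ^ 2 else 0)
      (fun i _ => by apply Finset.sum_nonneg; intro _ _; positivity) (Finset.mem_univ u)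
  unfold energy; linarith

end Aux
section Aux2
variable {V : Type} [Fintype V]

lemma walk_bound (G : SimpleGraph V) (f : V → ℝ) {u v : V} (p : G.Walk u v) :
    |f u - f v| ≤ p.length * Real.sqrt (2 * energy G f) := by
  induction p with
  | nil => simp
  | cons hadj q ih =>
    rename_i a b c
    have h1 : |f a - f b| ≤ Real.sqrt (2 * energy G f) := by
      rw [← Real.sqrt_sq (abs_nonneg (f a - f b))]
      apply Real.sqrt_le_sqrt
      rw [sq_abs]
      exact adj_diff_sq_le G f hadj
    calc |f a - f c| = |(f a - f b) + (f b - f c)| := by ring_nf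
      _ ≤ |f a - f b| + |f b - f c| := abs_add_le _ _
      _ ≤ Real.sqrt (2 * energy G f) + q.length * Real.sqrt (2 * energy G f) := by
          exact add_le_add h1 ih
      _ = (q.length + 1) * Real.sqrt (2 * energy G f) := by ring
      _ = _ := by simp [SimpleGraph.Walk.length_cons]

lemma val_bound (G : SimpleGraph V) (hconn : G.Connected) (f : V → ℝ) {x : V}
    (hx : f x = 0) (v : V) :
    |f v| ≤ Fintype.card V * Real.sqrt (2 * energy G f) := by
  classical
  obtain ⟨p⟩ := hconn.preconnected x v
  have hb := walk_bound G f (p.toPath : G.Walk x v)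
  have hlen : ((p.toPath : G.Walk x v)).length < Fintype.card V :=
    SimpleGraph.Walk.IsPath.length_lt p.toPath.2
  have hsq : (0:ℝ) ≤ Real.sqrt (2 * energy G f) := Real.sqrt_nonneg _
  have : |f v| = |f x - f v| := by rw [hx]; simp
  rw [this]
  calc |f x - f v| ≤ ((p.toPath : G.Walk x v)).length * Real.sqrt (2 * energy G f) := hb
    _ ≤ Fintype.card V * Real.sqrt (2 * energy G f) := by
        apply mul_le_mul_of_nonneg_right _ hsq
        exact_mod_cast hlen.le

lemma energy_continuous (G : SimpleGraph V) : Continuous fun f : V → ℝ => energy G f := by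
  unfold energy
  apply Continuous.mul continuous_const
  apply continuous_finset_sum; intro u _
  apply continuous_finset_sum; intro w _
  by_cases h : G.Adj u w <;> simp [h] <;> fun_prop

/-- existence of an energy minimizer among functions with `f x = 0`, `f y = 1`. -/
lemma exists_minimizer (G : SimpleGraph V) (hconn : G.Connected) (x y : V) (hxy : x ≠ y) :
    ∃ g : V → ℝ, g x = 0 ∧ g y = 1 ∧
      ∀ f : V → ℝ, f x = 0 → f y = 1 → energy G g ≤ energy G f := by
  classical
  set f₀ : V → ℝ := fun v => if v = y then 1 else 0 with hf₀
  set B : ℝ := energy G f₀ with hB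
  set K : Set (V → ℝ) := {f | f x = 0 ∧ f y = 1 ∧ energy G f ≤ B} with hK
  have hf₀K : f₀ ∈ K := ⟨by simp [hf₀, hxy], by simp [hf₀], le_refl _⟩
  have hclosed : IsClosed K := by
    apply IsClosed.inter
    · exact isClosed_eq (continuous_apply x) continuous_const
    apply IsClosed.inter
    · exact isClosed_eq (continuous_apply y) continuous_const
    · exact isClosed_le (energy_continuous G) continuous_const
  have hbdd : Bornology.IsBounded K := by
    apply Bornology.IsBounded.subset
      (Metric.isBounded_closedBall (x := (0 : V → ℝ))
        (r := Fintype.card V * Real.sqrt (2 * B)))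
    intro f hf
    obtain ⟨hfx, hfy, hfE⟩ := hf
    rw [Metric.mem_closedBall, dist_zero_right]
    apply pi_norm_le_iff_of_nonneg (by positivity) |>.2
    intro v
    calc ‖f v‖ ≤ Fintype.card V * Real.sqrt (2 * energy G f) := val_bound G hconn f hfx v
      _ ≤ Fintype.card V * Real.sqrt (2 * B) := by
          apply mul_le_mul_of_nonneg_left _ (by positivity)
          apply Real.sqrt_le_sqrt; linarith
  have hcomp : IsCompact K := Metric.isCompact_of_isClosed_isBounded hclosed hbdd
  obtain ⟨g, hgK, hgmin⟩ := hcomp.exists_isMinOn ⟨f₀, hf₀K⟩ (energy_continuous G).continuousOn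
  refine ⟨g, hgK.1, hgK.2.1, fun f hfx hfy => ?_⟩
  by_cases hEf : energy G f ≤ B
  · exact hgmin ⟨hfx, hfy, hEf⟩
  · calc energy G g ≤ B := hgK.2.2
      _ ≤ energy G f := le_of_not_ge hEf

end Aux2
section Aux3
variable {V : Type} [Fintype V]

/-- edge weight (discrete gradient). -/
noncomputable def ew (G : SimpleGraph V) (h : V → ℝ) (u w : V) : ℝ :=
  if G.Adj u w then h u - h w else 0

/-- divergence at a vertex. -/
noncomputable def dvg (G : SimpleGraph V) (h : V → ℝ) (v : V) : ℝ := ∑ w, ew G h v w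

/-- squared edge weight. -/
noncomputable def tq (G : SimpleGraph V) (h : V → ℝ) (u w : V) : ℝ :=
  if G.Adj u w then (h u - h w) ^ 2 else 0

lemma energy_eq_tq (G : SimpleGraph V) (f : V → ℝ) :
    energy G f = (1/2) * ∑ u, ∑ w, tq G f u w := rfl

lemma ew_antisymm (G : SimpleGraph V) (h : V → ℝ) (u w : V) :
    ew G h w u = - ew G h u w := by
  unfold ew
  by_cases hadj : G.Adj u w
  · rw [if_pos hadj, if_pos hadj.symm]; ring
  · rw [if_neg hadj, if_neg (fun hh => hadj hh.symm)]; ring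

lemma tq_symm (G : SimpleGraph V) (h : V → ℝ) (u w : V) : tq G h u w = tq G h w u := by
  unfold tq
  by_cases hadj : G.Adj u w
  · rw [if_pos hadj, if_pos hadj.symm]; ring
  · rw [if_neg hadj, if_neg (fun hh => hadj hh.symm)]

lemma tq_nonneg (G : SimpleGraph V) (h : V → ℝ) (u w : V) : 0 ≤ tq G h u w := by
  unfold tq; by_cases hadj : G.Adj u w <;> simp [hadj]; positivity

lemma tq_self (G : SimpleGraph V) (h : V → ℝ) (v : V) : tq G h v v = 0 := by
  simp [tq]

lemma energy_decomp (G : SimpleGraph V) (f : V → ℝ) (v : V) :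
    energy G f = (∑ w, tq G f v w)
      + (1/2) * ∑ u ∈ Finset.univ.erase v, ∑ w ∈ Finset.univ.erase v, tq G f u w := by
  classical
  have e1 : ∑ u, ∑ w, tq G f u w
      = (∑ w, tq G f v w) + ∑ u ∈ Finset.univ.erase v, ∑ w, tq G f u w :=
    (Finset.add_sum_erase _ _ (Finset.mem_univ v)).symm
  have e3 : ∑ u ∈ Finset.univ.erase v, ∑ w, tq G f u w
      = (∑ u ∈ Finset.univ.erase v, tq G f u v)
        + ∑ u ∈ Finset.univ.erase v, ∑ w ∈ Finset.univ.erase v, tq G f u w := by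
    rw [← Finset.sum_add_distrib]
    exact Finset.sum_congr rfl fun u _ => (Finset.add_sum_erase _ _ (Finset.mem_univ v)).symm
  have e4 : ∑ u ∈ Finset.univ.erase v, tq G f u v = ∑ w, tq G f v w := by
    rw [Finset.sum_congr rfl fun u _ => tq_symm G f u v]
    have : ∑ w, tq G f v w = tq G f v v + ∑ w ∈ Finset.univ.erase v, tq G f v w :=
      (Finset.add_sum_erase _ _ (Finset.mem_univ v)).symm
    rw [this, tq_self, zero_add]
  rw [energy_eq_tq, e1, e3, e4]; ring

lemma harmonic_of_min (G : SimpleGraph V) (hconn : G.Connected) {x y : V} (hxy : x ≠ y)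
    (g : V → ℝ) (hg0 : g x = 0) (hg1 : g y = 1)
    (hmin : ∀ f : V → ℝ, f x = 0 → f y = 1 → energy G g ≤ energy G f)
    {v : V} (hvx : v ≠ x) (hvy : v ≠ y) : dvg G g v = 0 := by
  classical
  have hd : (0:ℝ) < (deg G v : ℝ) := by
    exact_mod_cast deg_pos G hconn hxy v
  have key : ∀ s : ℝ, 0 ≤ 2 * s * dvg G g v + s ^ 2 * (deg G v : ℝ) := by
    intro s
    set g' : V → ℝ := Function.update g v (g v + s) with hg'
    have hg'x : g' x = 0 := by rw [hg', Function.update_of_ne (fun hh => hvx hh.symm), hg0]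
    have hg'y : g' y = 1 := by rw [hg', Function.update_of_ne (fun hh => hvy hh.symm), hg1]
    have hE := hmin g' hg'x hg'y
    have hrow : ∀ w, tq G g' v w = tq G g v w + (2 * s * ew G g v w
        + s ^ 2 * (if G.Adj v w then (1:ℝ) else 0)) := by
      intro w
      by_cases hadj : G.Adj v w
      · have hwv : w ≠ v := fun hh => (G.ne_of_adj hadj) hh.symm
        have h1 : g' v = g v + s := Function.update_self _ _ _
        have h2 : g' w = g w := Function.update_of_ne hwv _ _
        simp only [tq, ew, if_pos hadj, h1, h2]; ring
      · simp [tq, ew, hadj]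
    have hrowsum : ∑ w, tq G g' v w
        = (∑ w, tq G g v w) + (2 * s * dvg G g v + s ^ 2 * (deg G v : ℝ)) := by
      rw [Finset.sum_congr rfl fun w _ => hrow w, Finset.sum_add_distrib,
        Finset.sum_add_distrib, ← Finset.mul_sum, ← Finset.mul_sum, deg_cast]
      rfl
    have hrest : ∑ u ∈ Finset.univ.erase v, ∑ w ∈ Finset.univ.erase v, tq G g' u w
        = ∑ u ∈ Finset.univ.erase v, ∑ w ∈ Finset.univ.erase v, tq G g u w := by
      apply Finset.sum_congr rfl; intro u hu
      apply Finset.sum_congr rfl; intro w hw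
      have hu' : u ≠ v := (Finset.mem_erase.1 hu).1
      have hw' : w ≠ v := (Finset.mem_erase.1 hw).1
      simp only [tq, hg', Function.update_of_ne hu', Function.update_of_ne hw']
    have d1 := energy_decomp G g v
    have d2 := energy_decomp G g' v
    rw [d1, d2, hrest, hrowsum] at hE
    linarith
  have h1 := key (-(dvg G g v) / (deg G v : ℝ))
  have h2 : 2 * (-(dvg G g v) / (deg G v : ℝ)) * dvg G g v
      + (-(dvg G g v) / (deg G v : ℝ)) ^ 2 * (deg G v : ℝ)
      = -(dvg G g v ^ 2) / (deg G v : ℝ) := by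
    field_simp; ring
  rw [h2] at h1
  have h3 : dvg G g v ^ 2 ≤ 0 := by
    have := div_nonneg_iff.mp h1
    rcases this with ⟨ha, _⟩ | ⟨ha, hb⟩
    · linarith
    · nlinarith
  nlinarith [sq_nonneg (dvg G g v)]

end Aux3
section Aux4
set_option linter.unusedSectionVars false
variable {V : Type} [Fintype V]

lemma green (G : SimpleGraph V) (h : V → ℝ) :
    ∑ v, h v * dvg G h v = energy G h := by
  classical
  have hB : ∑ v, ∑ w, h w * ew G h v w = - ∑ v, ∑ w, h v * ew G h v w := by
    rw [Finset.sum_comm]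
    rw [← Finset.sum_neg_distrib]
    apply Finset.sum_congr rfl; intro a _
    rw [← Finset.sum_neg_distrib]
    apply Finset.sum_congr rfl; intro b _
    rw [ew_antisymm]; ring
  have hAB : ∑ v, ∑ w, h v * ew G h v w - ∑ v, ∑ w, h w * ew G h v w
      = 2 * energy G h := by
    rw [← Finset.sum_sub_distrib]
    have : ∀ v, (∑ w, h v * ew G h v w) - (∑ w, h w * ew G h v w) = ∑ w, tq G h v w := by
      intro v
      rw [← Finset.sum_sub_distrib]
      apply Finset.sum_congr rfl; intro w _
      unfold ew tq
      by_cases hadj : G.Adj v w <;> simp [hadj] <;> ring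
    rw [Finset.sum_congr rfl fun v _ => this v, energy_eq_tq]
    ring
  have hA : ∑ v, h v * dvg G h v = ∑ v, ∑ w, h v * ew G h v w := by
    apply Finset.sum_congr rfl; intro v _
    rw [dvg, Finset.mul_sum]
  rw [hA]; linarith

lemma inner_cancel (G : SimpleGraph V) (h : V → ℝ) (S : Finset V) :
    ∑ u ∈ S, ∑ w ∈ S, ew G h u w = 0 := by
  classical
  have h1 : ∑ u ∈ S, ∑ w ∈ S, ew G h u w = - ∑ u ∈ S, ∑ w ∈ S, ew G h u w := by
    nth_rewrite 1 [Finset.sum_comm]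
    rw [← Finset.sum_neg_distrib]
    apply Finset.sum_congr rfl; intro a _
    rw [← Finset.sum_neg_distrib]
    apply Finset.sum_congr rfl; intro b _
    rw [ew_antisymm]
  linarith

lemma cut_flow (G : SimpleGraph V) (h : V → ℝ) {x y : V}
    (hdx : dvg G h x = 1) (hharm : ∀ v, v ≠ x → v ≠ y → dvg G h v = 0)
    (S : Finset V) (hxS : x ∈ S) (hyS : y ∉ S) :
    ∑ u ∈ S, ∑ w ∈ Sᶜ, ew G h u w = 1 := by
  classical
  have h1 : ∑ u ∈ S, dvg G h u = 1 := by
    rw [Finset.sum_eq_single_of_mem x hxS]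
    · exact hdx
    · intro u huS hux
      exact hharm u hux (fun hh => hyS (hh ▸ huS))
  have h2 : ∑ u ∈ S, dvg G h u
      = ∑ u ∈ S, ∑ w ∈ S, ew G h u w + ∑ u ∈ S, ∑ w ∈ Sᶜ, ew G h u w := by
    rw [← Finset.sum_add_distrib]
    apply Finset.sum_congr rfl; intro u _
    rw [dvg, ← Finset.sum_add_sum_compl S (ew G h u)]
  rw [h2, inner_cancel, zero_add] at h1
  exact h1

/-- downward flow out of `v`. -/
noncomputable def dnf (G : SimpleGraph V) (h : V → ℝ) (v : V) : ℝ :=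
  ∑ w, if G.Adj v w ∧ h w < h v then h v - h w else 0

/-- upward flow into `v`. -/
noncomputable def upf (G : SimpleGraph V) (h : V → ℝ) (v : V) : ℝ :=
  ∑ w, if G.Adj v w ∧ h v < h w then h w - h v else 0

lemma ew_nonneg_of (G : SimpleGraph V) (h : V → ℝ) {u w : V} (hle : h w ≤ h u) :
    0 ≤ ew G h u w := by
  unfold ew
  by_cases hadj : G.Adj u w
  · rw [if_pos hadj]; linarith
  · rw [if_neg hadj]

lemma dnfterm_nonneg (G : SimpleGraph V) (h : V → ℝ) (v i : V) :
    0 ≤ if G.Adj v i ∧ h i < h v then h v - h i else 0 := by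
  by_cases hc : G.Adj v i ∧ h i < h v
  · rw [if_pos hc]; linarith [hc.2]
  · rw [if_neg hc]

lemma dnf_nonneg (G : SimpleGraph V) (h : V → ℝ) (v : V) : 0 ≤ dnf G h v := by
  apply Finset.sum_nonneg; intro w _
  by_cases hc : G.Adj v w ∧ h w < h v
  · rw [if_pos hc]; linarith [hc.2]
  · rw [if_neg hc]

lemma dnf_single_le (G : SimpleGraph V) (h : V → ℝ) {v w : V}
    (hadj : G.Adj v w) (hlt : h w < h v) : h v - h w ≤ dnf G h v := by
  have := Finset.single_le_sum
    (f := fun w' => if G.Adj v w' ∧ h w' < h v then h v - h w' else 0)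
    (s := Finset.univ)
    (fun i _ => dnfterm_nonneg G h v i) (Finset.mem_univ w)
  simpa [dnf, hadj, hlt] using this

lemma dnf_le_one (G : SimpleGraph V) (h : V → ℝ) {x y : V}
    (hdx : dvg G h x = 1) (hharm : ∀ v, v ≠ x → v ≠ y → dvg G h v = 0)
    (hy0 : h y = 0) (hnn : ∀ v, 0 ≤ h v) (hub : ∀ v, h v ≤ h x)
    (v : V) : dnf G h v ≤ 1 := by
  classical
  by_cases hv0 : h v ≤ 0
  · have : dnf G h v = 0 := by
      apply Finset.sum_eq_zero; intro w _
      rw [if_neg]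
      rintro ⟨-, hlt⟩
      linarith [hnn w]
    linarith
  push_neg at hv0
  set S : Finset V := Finset.univ.filter (fun z => h v ≤ h z) with hS
  have hxS : x ∈ S := Finset.mem_filter.2 ⟨Finset.mem_univ x, hub v⟩
  have hyS : y ∉ S := by
    intro hc
    have := (Finset.mem_filter.1 hc).2
    rw [hy0] at this; linarith
  have hcut := cut_flow G h hdx hharm S hxS hyS
  have hdn : dnf G h v = ∑ w ∈ Sᶜ, ew G h v w := by
    rw [Finset.compl_filter, Finset.sum_filter]
    apply Finset.sum_congr rfl; intro w _
    by_cases hadj : G.Adj v w <;> by_cases hw : h w < h v <;>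
      simp [ew, hadj, hw, not_le, not_lt.2]
  have hvS : v ∈ S := Finset.mem_filter.2 ⟨Finset.mem_univ v, le_refl _⟩
  have hmono : dnf G h v ≤ ∑ u ∈ S, ∑ w ∈ Sᶜ, ew G h u w := by
    rw [hdn]
    apply Finset.single_le_sum (f := fun u => ∑ w ∈ Sᶜ, ew G h u w) _ hvS
    intro u huS
    apply Finset.sum_nonneg; intro w hwC
    have hu : h v ≤ h u := (Finset.mem_filter.1 huS).2
    have hw : ¬ (h v ≤ h w) := by
      have := Finset.mem_compl.1 hwC
      rw [hS, Finset.mem_filter] at this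
      push_neg at this
      exact fun hc => absurd (this (Finset.mem_univ w)) (not_lt.2 hc)
    push_neg at hw
    exact ew_nonneg_of G h (by linarith)
  linarith [hcut, hmono]

lemma upf_le_one (G : SimpleGraph V) (h : V → ℝ) {x y : V}
    (hdx : dvg G h x = 1) (hharm : ∀ v, v ≠ x → v ≠ y → dvg G h v = 0)
    (hy0 : h y = 0) (hnn : ∀ v, 0 ≤ h v) (hub : ∀ v, h v ≤ h x)
    (v : V) : upf G h v ≤ 1 := by
  classical
  by_cases hvR : h x ≤ h v
  · have : upf G h v = 0 := by
      apply Finset.sum_eq_zero; intro w _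
      rw [if_neg]
      rintro ⟨-, hlt⟩
      linarith [hub w]
    linarith
  push_neg at hvR
  set S : Finset V := Finset.univ.filter (fun z => h v < h z) with hS
  have hxS : x ∈ S := Finset.mem_filter.2 ⟨Finset.mem_univ x, hvR⟩
  have hyS : y ∉ S := by
    intro hc
    have := (Finset.mem_filter.1 hc).2
    rw [hy0] at this; linarith [hnn v]
  have hcut := cut_flow G h hdx hharm S hxS hyS
  have hvC : v ∈ Sᶜ := by
    rw [Finset.mem_compl, hS, Finset.mem_filter]
    push_neg
    intro _; exact le_refl _
  have hup : upf G h v = ∑ u ∈ S, ew G h u v := by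
    rw [hS, Finset.sum_filter]
    apply Finset.sum_congr rfl; intro u _
    by_cases hu : h v < h u <;> by_cases hadj : G.Adj v u <;>
      simp [ew, hu, hadj, G.adj_comm]
  have hmono : upf G h v ≤ ∑ u ∈ S, ∑ w ∈ Sᶜ, ew G h u w := by
    rw [hup]
    apply Finset.sum_le_sum
    intro u huS
    have hu : h v < h u := (Finset.mem_filter.1 huS).2
    apply Finset.single_le_sum (f := fun w => ew G h u w) _ hvC
    intro w hwC
    have hw : ¬ (h v < h w) := by
      have := Finset.mem_compl.1 hwC
      rw [hS, Finset.mem_filter] at this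
      push_neg at this
      exact not_lt.2 (this (Finset.mem_univ w))
    push_neg at hw
    exact ew_nonneg_of G h (by linarith)
  linarith [hcut, hmono]

end Aux4
section Aux5
set_option linter.unusedSectionVars false
variable {V : Type} [Fintype V]

lemma deg_eq_card (G : SimpleGraph V) (v : V) :
    deg G v = (Finset.univ.filter (fun w => G.Adj v w)).card := by
  classical
  rw [deg, Nat.card_coe_set_eq, Set.ncard_eq_toFinset_card']
  congr 1
  ext w
  simp [SimpleGraph.neighborSet]
  exact Set.mem_toFinset

lemma tq_row_le_deg (G : SimpleGraph V) (hconn : G.Connected) {x y : V} (hxy : x ≠ y)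
    (h : V → ℝ)
    (hdx : dvg G h x = 1) (hharm : ∀ v, v ≠ x → v ≠ y → dvg G h v = 0)
    (hy0 : h y = 0) (hnn : ∀ v, 0 ≤ h v) (hub : ∀ v, h v ≤ h x)
    {v : V} (hvy : v ≠ y) : ∑ w, tq G h v w ≤ (deg G v : ℝ) := by
  classical
  have hdeg1 : (1:ℝ) ≤ (deg G v : ℝ) := by
    exact_mod_cast deg_pos G hconn hxy v
  have hedge : ∀ u w : V, G.Adj u w → h w < h u → h u - h w ≤ 1 :=
    fun u w hadj hlt => le_trans (dnf_single_le G h hadj hlt)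
      (dnf_le_one G h hdx hharm hy0 hnn hub u)
  have hrowle : ∑ w, tq G h v w ≤ dnf G h v + upf G h v := by
    unfold dnf upf
    rw [← Finset.sum_add_distrib]
    apply Finset.sum_le_sum
    intro w _
    by_cases hadj : G.Adj v w
    · rcases lt_trichotomy (h w) (h v) with hlt | heq | hgt
      · rw [tq, if_pos hadj, if_pos ⟨hadj, hlt⟩,
          if_neg (by rintro ⟨-, hl⟩; linarith)]
        have h1 := hedge v w hadj hlt
        nlinarith
      · rw [tq, if_pos hadj, if_neg (by rintro ⟨-, hl⟩; linarith),
          if_neg (by rintro ⟨-, hl⟩; linarith), heq]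
        simp
      · rw [tq, if_pos hadj, if_neg (by rintro ⟨-, hl⟩; linarith),
          if_pos ⟨hadj, hgt⟩]
        have h1 := hedge w v hadj.symm hgt
        nlinarith
    · rw [tq, if_neg hadj, if_neg (by rintro ⟨ha, -⟩; exact hadj ha),
        if_neg (by rintro ⟨ha, -⟩; exact hadj ha)]
      simp
  by_cases hvx : v = x
  · subst hvx
    have hup0 : upf G h v = 0 := by
      apply Finset.sum_eq_zero; intro w _
      rw [if_neg]
      rintro ⟨-, hlt⟩
      linarith [hub w]
    have := dnf_le_one G h hdx hharm hy0 hnn hub v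
    linarith
  · by_cases hd2 : 2 ≤ deg G v
    · have : (2:ℝ) ≤ (deg G v : ℝ) := by exact_mod_cast hd2
      have h1 := dnf_le_one G h hdx hharm hy0 hnn hub v
      have h2 := upf_le_one G h hdx hharm hy0 hnn hub v
      linarith
    · -- degree one vertex, harmonic ⟹ locally constant
      have hdeg : deg G v = 1 := by
        have := deg_pos G hconn hxy v
        omega
      rw [deg_eq_card] at hdeg
      obtain ⟨w₀, hw₀⟩ := Finset.card_eq_one.1 hdeg
      have hσ : dvg G h v = h v - h w₀ := by
        unfold dvg ew
        rw [← Finset.sum_filter, hw₀, Finset.sum_singleton]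
      have hzero := hharm v hvx hvy
      rw [hσ] at hzero
      have hrow0 : ∑ w, tq G h v w = (h v - h w₀)^2 := by
        unfold tq
        rw [← Finset.sum_filter, hw₀, Finset.sum_singleton]
      rw [hrow0]
      nlinarith

/-- Existence of the voltage function with all required properties. -/
lemma exists_good_h (G : SimpleGraph V) (hconn : G.Connected) (x y : V) (hxy : x ≠ y) :
    ∃ h : V → ℝ, h x = effRes G x y ∧ h y = 0 ∧ (∀ v, 0 ≤ h v) ∧ (∀ v, h v ≤ h x) ∧
      0 < effCond G x y ∧
      dvg G h x = 1 ∧ (∀ v, v ≠ x → v ≠ y → dvg G h v = 0) ∧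
      (∀ v, v ≠ y → ∑ w, tq G h v w ≤ (deg G v : ℝ)) := by
  classical
  obtain ⟨g₁, hg₁0, hg₁1, hmin₁⟩ := exists_minimizer G hconn x y hxy
  set g : V → ℝ := fun v => max 0 (min 1 (g₁ v)) with hgdef
  have hg0 : g x = 0 := by simp [hgdef, hg₁0]
  have hg1 : g y = 1 := by simp [hgdef, hg₁1]
  have hrange : ∀ v, 0 ≤ g v ∧ g v ≤ 1 := fun v =>
    ⟨le_max_left _ _, max_le zero_le_one (min_le_left _ _)⟩
  have hminlip : ∀ a b : ℝ, |min 1 a - min 1 b| ≤ |a - b| := by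
    intro a b
    rcases le_total 1 a with h1a | h1a <;> rcases le_total 1 b with h1b | h1b
    · rw [min_eq_left h1a, min_eq_left h1b, sub_self, abs_zero]
      exact abs_nonneg _
    · rw [min_eq_left h1a, min_eq_right h1b, abs_sub_le_iff]
      constructor <;> linarith [le_abs_self (a - b), neg_abs_le (a - b), abs_nonneg (a - b)]
    · rw [min_eq_right h1a, min_eq_left h1b, abs_sub_le_iff]
      constructor <;> linarith [le_abs_self (a - b), neg_abs_le (a - b), abs_nonneg (a - b)]
    · rw [min_eq_right h1a, min_eq_right h1b]
  have hlip : ∀ a b : ℝ, |max 0 (min 1 a) - max 0 (min 1 b)| ≤ |a - b| := by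
    intro a b
    calc |max 0 (min 1 a) - max 0 (min 1 b)|
        = |min 1 a ⊔ 0 - min 1 b ⊔ 0| := by rw [max_comm (0:ℝ), max_comm (0:ℝ)]
      _ ≤ |min 1 a - min 1 b| := abs_max_sub_max_le_abs _ _ _
      _ ≤ |a - b| := hminlip a b
  have hgE : energy G g ≤ energy G g₁ := by
    unfold energy
    apply mul_le_mul_of_nonneg_left _ (by norm_num)
    apply Finset.sum_le_sum; intro u _
    apply Finset.sum_le_sum; intro w _
    by_cases hadj : G.Adj u w
    · rw [if_pos hadj, if_pos hadj]
      have h1 : |g u - g w| ≤ |g₁ u - g₁ w| := hlip (g₁ u) (g₁ w)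
      calc (g u - g w)^2 = |g u - g w|^2 := by rw [sq_abs]
        _ ≤ |g₁ u - g₁ w|^2 := by
            apply pow_le_pow_left₀ (abs_nonneg _) h1
        _ = (g₁ u - g₁ w)^2 := by rw [sq_abs]
    · rw [if_neg hadj, if_neg hadj]
  have hming : ∀ f : V → ℝ, f x = 0 → f y = 1 → energy G g ≤ energy G f :=
    fun f hfx hfy => le_trans hgE (hmin₁ f hfx hfy)
  have hmem : energy G g ∈ {e : ℝ | ∃ f : V → ℝ, f x = 0 ∧ f y = 1 ∧ e = energy G f} :=
    ⟨g, hg0, hg1, rfl⟩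
  have hbdd : BddBelow {e : ℝ | ∃ f : V → ℝ, f x = 0 ∧ f y = 1 ∧ e = energy G f} :=
    ⟨0, by rintro e ⟨f, -, -, rfl⟩; exact energy_nonneg G f⟩
  have hCg : effCond G x y = energy G g := by
    apply le_antisymm (csInf_le hbdd hmem)
    apply le_csInf ⟨energy G g, hmem⟩
    rintro e ⟨f, hfx, hfy, rfl⟩
    exact hming f hfx hfy
  have hCpos : 0 < effCond G x y := by
    rw [hCg]
    rcases lt_or_ge 0 (energy G g) with h1 | h1
    · exact h1
    · exfalso
      have h0 : energy G g = 0 := le_antisymm h1 (energy_nonneg G g)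
      have hb := val_bound G hconn g hg0 y
      rw [hg1, h0] at hb
      norm_num at hb
  set R : ℝ := effRes G x y with hRdef
  have hRC : R = (effCond G x y)⁻¹ := rfl
  have hRpos : 0 < R := by rw [hRC]; exact inv_pos.2 hCpos
  set h : V → ℝ := fun v => R * (1 - g v) with hhdef
  have hhx : h x = R := by simp [hhdef, hg0]
  have hhy : h y = 0 := by simp [hhdef, hg1]
  have hnn : ∀ v, 0 ≤ h v := fun v =>
    mul_nonneg hRpos.le (by linarith [(hrange v).2])
  have hub : ∀ v, h v ≤ h x := by
    intro v
    rw [hhx]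
    show R * (1 - g v) ≤ R
    nlinarith [(hrange v).1, hRpos]
  have hsc : ∀ v, dvg G h v = -R * dvg G g v := by
    intro v
    unfold dvg ew
    rw [Finset.mul_sum]
    apply Finset.sum_congr rfl; intro w _
    by_cases hadj : G.Adj v w
    · rw [if_pos hadj, if_pos hadj, hhdef]; ring
    · rw [if_neg hadj, if_neg hadj]; ring
  have hharm : ∀ v, v ≠ x → v ≠ y → dvg G h v = 0 := by
    intro v hvx hvy
    rw [hsc v, harmonic_of_min G hconn hxy g hg0 hg1 hming hvx hvy, mul_zero]
  have henh : energy G h = R := by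
    have hsum : ∑ u, ∑ w, (if G.Adj u w then (h u - h w)^2 else 0)
        = R^2 * ∑ u, ∑ w, (if G.Adj u w then (g u - g w)^2 else 0) := by
      rw [Finset.mul_sum]
      apply Finset.sum_congr rfl; intro u _
      rw [Finset.mul_sum]
      apply Finset.sum_congr rfl; intro w _
      by_cases hadj : G.Adj u w
      · rw [if_pos hadj, if_pos hadj]
        show (R * (1 - g u) - R * (1 - g w))^2 = R^2 * (g u - g w)^2
        ring
      · rw [if_neg hadj, if_neg hadj, mul_zero]
    have hsq : energy G h = R^2 * energy G g := by
      unfold energy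
      rw [hsum]
      ring
    rw [hsq, ← hCg, hRC]
    field_simp
  have hdx : dvg G h x = 1 := by
    have hgr := green G h
    have hsum : ∑ v, h v * dvg G h v = h x * dvg G h x := by
      apply Finset.sum_eq_single_of_mem x (Finset.mem_univ x)
      intro v _ hvx
      by_cases hvy : v = y
      · rw [hvy, hhy, zero_mul]
      · rw [hharm v hvx hvy, mul_zero]
    rw [hsum, hhx, henh] at hgr
    have : R * dvg G h x = R * 1 := by rw [hgr, mul_one]
    exact mul_left_cancel₀ hRpos.ne' this
  refine ⟨h, hhx, hhy, hnn, hub, hCpos, hdx, hharm, ?_⟩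
  intro v hvy
  exact tq_row_le_deg G hconn hxy h hdx hharm hhy hnn hub hvy

end Aux5
section Aux6
set_option linter.unusedSectionVars false
variable {V : Type} [Fintype V]

/-- single step transition probability. -/
noncomputable def stepP (G : SimpleGraph V) (v w : V) : ℝ :=
  if G.Adj v w then ((deg G v : ℝ))⁻¹ else 0

/-- a path starting at `x` that avoids `y` after time 0. -/
def okPath (x y : V) {t : ℕ} (p : Fin (t + 1) → V) : Prop :=
  p 0 = x ∧ ∀ i : Fin (t + 1), i ≠ 0 → p i ≠ y

/-- occupation measure of the walk killed at `y`. -/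
noncomputable def aOcc (G : SimpleGraph V) (x y : V) (t : ℕ) (v : V) : ℝ :=
  ∑ p : Fin (t + 1) → V,
    if okPath x y p ∧ p (Fin.last t) = v then pathProb G p else 0

lemma stepP_nonneg (G : SimpleGraph V) (v w : V) : 0 ≤ stepP G v w := by
  unfold stepP
  by_cases hadj : G.Adj v w
  · rw [if_pos hadj]; positivity
  · rw [if_neg hadj]

lemma stepP_rowsum (G : SimpleGraph V) (hconn : G.Connected) {x y : V} (hxy : x ≠ y)
    (u : V) : ∑ w, stepP G u w = 1 := by
  have hdeg : (0:ℝ) < (deg G u : ℝ) := by exact_mod_cast deg_pos G hconn hxy u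
  have h1 : ∀ w, stepP G u w = (if G.Adj u w then (1:ℝ) else 0) * ((deg G u : ℝ))⁻¹ := by
    intro w; unfold stepP
    by_cases hadj : G.Adj u w
    · rw [if_pos hadj, if_pos hadj, one_mul]
    · rw [if_neg hadj, if_neg hadj, zero_mul]
  rw [Finset.sum_congr rfl fun w _ => h1 w, ← Finset.sum_mul, ← deg_cast]
  exact mul_inv_cancel₀ hdeg.ne'

lemma pathProb_nonneg (G : SimpleGraph V) {t : ℕ} (p : Fin (t + 1) → V) :
    0 ≤ pathProb G p := by
  unfold pathProb
  by_cases hc : ∀ i : Fin t, G.Adj (p i.castSucc) (p i.succ)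
  · rw [if_pos hc]
    apply Finset.prod_nonneg; intro i _
    positivity
  · rw [if_neg hc]

lemma aOcc_nonneg (G : SimpleGraph V) (x y : V) (t : ℕ) (v : V) : 0 ≤ aOcc G x y t v := by
  apply Finset.sum_nonneg; intro p _
  by_cases hc : okPath x y p ∧ p (Fin.last t) = v
  · rw [if_pos hc]; exact pathProb_nonneg G p
  · rw [if_neg hc]

/-- summing over paths of length `t+1` by splitting off the final vertex. -/
lemma sum_snoc {t : ℕ} (F : (Fin (t + 2) → V) → ℝ) :
    ∑ p : Fin (t + 2) → V, F p = ∑ q : Fin (t + 1) → V, ∑ z : V, F (Fin.snoc q z) := by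
  classical
  rw [← Equiv.sum_comp (show ((Fin (t + 1) → V) × V) ≃ (Fin (t + 2) → V) from
    ⟨fun qz => Fin.snoc qz.1 qz.2, fun p => (Fin.init p, p (Fin.last (t + 1))),
      fun qz => by simp, fun p => Fin.snoc_init_self p⟩) F,
    Fintype.sum_prod_type]
  rfl

lemma pathProb_snoc (G : SimpleGraph V) {t : ℕ} (q : Fin (t + 1) → V) (z : V) :
    pathProb G (Fin.snoc q z) = pathProb G q * stepP G (q (Fin.last t)) z := by
  classical
  have hiff : (∀ i : Fin (t + 1),
        G.Adj ((Fin.snoc q z : Fin (t + 2) → V) i.castSucc)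
          ((Fin.snoc q z : Fin (t + 2) → V) i.succ))
      ↔ ((∀ i : Fin t, G.Adj (q i.castSucc) (q i.succ)) ∧ G.Adj (q (Fin.last t)) z) := by
    constructor
    · intro H
      constructor
      · intro i
        have := H i.castSucc
        simpa only [Fin.succ_castSucc, Fin.snoc_castSucc] using this
      · have := H (Fin.last t)
        simpa only [Fin.succ_last, Fin.snoc_castSucc, Fin.snoc_last] using this
    · rintro ⟨H1, H2⟩ i
      refine Fin.lastCases ?_ ?_ i
      · simpa only [Fin.succ_last, Fin.snoc_castSucc, Fin.snoc_last] using H2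
      · intro j
        simpa only [Fin.succ_castSucc, Fin.snoc_castSucc] using H1 j
  have hprod : ∏ i : Fin (t + 1),
        ((deg G ((Fin.snoc q z : Fin (t + 2) → V) i.castSucc) : ℝ))⁻¹
      = (∏ i : Fin t, ((deg G (q i.castSucc) : ℝ))⁻¹) * ((deg G (q (Fin.last t)) : ℝ))⁻¹ := by
    rw [Fin.prod_univ_castSucc]
    simp only [Fin.snoc_castSucc]
  unfold pathProb stepP
  by_cases h1 : ∀ i : Fin t, G.Adj (q i.castSucc) (q i.succ) <;>
    by_cases h2 : G.Adj (q (Fin.last t)) z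
  · rw [if_pos (hiff.2 ⟨h1, h2⟩), if_pos h1, if_pos h2, hprod]
  · rw [if_neg (fun hc => h2 (hiff.1 hc).2), if_neg h2, mul_zero]
  · rw [if_neg (fun hc => h1 (hiff.1 hc).1), if_neg h1, zero_mul]
  · rw [if_neg (fun hc => h1 (hiff.1 hc).1), if_neg h1, zero_mul]

lemma aOcc_zero (G : SimpleGraph V) (x y : V) (v : V) :
    aOcc G x y 0 v = if v = x then 1 else 0 := by
  classical
  unfold aOcc
  have e := Equiv.sum_comp (Equiv.funUnique (Fin 1) V).symm
    (fun p : Fin 1 → V =>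
      if okPath x y p ∧ p (Fin.last 0) = v then pathProb G p else 0)
  rw [← e]
  have hterm : ∀ z : V,
      (if okPath x y ((Equiv.funUnique (Fin 1) V).symm z) ∧
          ((Equiv.funUnique (Fin 1) V).symm z) (Fin.last 0) = v
        then pathProb G ((Equiv.funUnique (Fin 1) V).symm z) else 0)
      = if z = x ∧ z = v then 1 else 0 := by
    intro z
    have hp : ((Equiv.funUnique (Fin 1) V).symm z) = fun _ => z := rfl
    have hok : (okPath x y ((Equiv.funUnique (Fin 1) V).symm z) ∧
        ((Equiv.funUnique (Fin 1) V).symm z) (Fin.last 0) = v) ↔ (z = x ∧ z = v) := by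
      rw [hp]
      unfold okPath
      constructor
      · rintro ⟨⟨hz, -⟩, hv⟩; exact ⟨hz, hv⟩
      · rintro ⟨hz, hv⟩
        refine ⟨⟨hz, ?_⟩, hv⟩
        intro i hi
        exact absurd (Fin.fin_one_eq_zero i) hi
    have hpp : pathProb G ((Equiv.funUnique (Fin 1) V).symm z) = 1 := by
      unfold pathProb
      rw [if_pos (fun i : Fin 0 => i.elim0)]
      simp
    by_cases hc : z = x ∧ z = v
    · rw [if_pos (hok.2 hc), if_pos hc, hpp]
    · rw [if_neg (fun hh => hc (hok.1 hh)), if_neg hc]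
  rw [Finset.sum_congr rfl fun z _ => hterm z]
  by_cases hvx : v = x
  · rw [if_pos hvx]
    have hterm2 : ∀ z : V, (if z = x ∧ z = v then (1:ℝ) else 0) = if z = v then 1 else 0 := by
      intro z
      by_cases hz : z = v
      · rw [if_pos ⟨hz.trans hvx, hz⟩, if_pos hz]
      · rw [if_neg (fun hh => hz hh.2), if_neg hz]
    rw [Finset.sum_congr rfl fun z _ => hterm2 z,
      Finset.sum_ite_eq' Finset.univ v fun _ => (1:ℝ)]
    rw [if_pos (Finset.mem_univ v)]
  · rw [if_neg hvx]
    apply Finset.sum_eq_zero; intro z _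
    rw [if_neg (fun hh => hvx (hh.2.symm.trans hh.1))]

end Aux6
section Aux7
set_option linter.unusedSectionVars false
variable {V : Type} [Fintype V]

lemma okPath_snoc (x y : V) {t : ℕ} (q : Fin (t + 1) → V) (z : V) :
    okPath x y (Fin.snoc q z : Fin (t + 2) → V) ↔ okPath x y q ∧ z ≠ y := by
  unfold okPath
  constructor
  · rintro ⟨h0, hint⟩
    have hq0 : (Fin.snoc q z : Fin (t + 2) → V) 0 = q 0 := by
      rw [← Fin.castSucc_zero, Fin.snoc_castSucc]
    refine ⟨⟨hq0 ▸ h0, ?_⟩, ?_⟩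
    · intro j hj
      have := hint j.castSucc (by
        rw [Ne, Fin.castSucc_eq_zero_iff]
        exact hj)
      rwa [Fin.snoc_castSucc] at this
    · have := hint (Fin.last (t + 1)) (by
        exact (Fin.last_pos (n := t)).ne')
      rwa [Fin.snoc_last] at this
  · rintro ⟨⟨h0, hint⟩, hz⟩
    constructor
    · rw [← Fin.castSucc_zero, Fin.snoc_castSucc]
      exact h0
    · intro i hi
      refine Fin.lastCases ?_ ?_ i hi
      · intro _
        rw [Fin.snoc_last]
        exact hz
      · intro j hj
        rw [Fin.snoc_castSucc]
        apply hint
        intro hc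
        exact hj (by rw [hc, Fin.castSucc_zero])

lemma sum_by_last (G : SimpleGraph V) (x y : V) {t : ℕ} (c : V → ℝ) :
    (∑ q : Fin (t + 1) → V,
      if okPath x y q then pathProb G q * c (q (Fin.last t)) else 0)
      = ∑ u, aOcc G x y t u * c u := by
  classical
  have hswap : ∑ u, aOcc G x y t u * c u
      = ∑ q : Fin (t + 1) → V, ∑ u,
          (if okPath x y q ∧ q (Fin.last t) = u then pathProb G q else 0) * c u := by
    rw [Finset.sum_comm]
    apply Finset.sum_congr rfl; intro u _
    rw [aOcc, Finset.sum_mul]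
  rw [hswap]
  apply Finset.sum_congr rfl; intro q _
  by_cases hok : okPath x y q
  · rw [if_pos hok]
    have hterm : ∀ u, (if okPath x y q ∧ q (Fin.last t) = u then pathProb G q else 0) * c u
        = if u = q (Fin.last t) then pathProb G q * c u else 0 := by
      intro u
      by_cases hu : u = q (Fin.last t)
      · rw [if_pos ⟨hok, hu.symm⟩, if_pos hu]
      · rw [if_neg (fun hh => hu hh.2.symm), if_neg hu, zero_mul]
    rw [Finset.sum_congr rfl fun u _ => hterm u,
      Finset.sum_ite_eq' Finset.univ (q (Fin.last t)) (fun u => pathProb G q * c u),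
      if_pos (Finset.mem_univ _)]
  · rw [if_neg hok]
    symm
    apply Finset.sum_eq_zero; intro u _
    rw [if_neg (fun hh => hok hh.1), zero_mul]

lemma aOcc_succ (G : SimpleGraph V) (x y : V) {t : ℕ} (v : V) :
    aOcc G x y (t + 1) v
      = if v = y then 0 else ∑ u, aOcc G x y t u * stepP G u v := by
  classical
  rw [aOcc, sum_snoc (fun p => if okPath x y p ∧ p (Fin.last (t + 1)) = v
    then pathProb G p else 0)]
  have hterm : ∀ (q : Fin (t + 1) → V) (z : V),
      (if okPath x y (Fin.snoc q z : Fin (t + 2) → V) ∧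
          (Fin.snoc q z : Fin (t + 2) → V) (Fin.last (t + 1)) = v
        then pathProb G (Fin.snoc q z) else 0)
      = if (okPath x y q ∧ z ≠ y) ∧ z = v
          then pathProb G q * stepP G (q (Fin.last t)) z else 0 := by
    intro q z
    have hcond : (okPath x y (Fin.snoc q z : Fin (t + 2) → V) ∧
        (Fin.snoc q z : Fin (t + 2) → V) (Fin.last (t + 1)) = v)
        ↔ ((okPath x y q ∧ z ≠ y) ∧ z = v) := by
      rw [okPath_snoc, Fin.snoc_last]
    by_cases hc : (okPath x y q ∧ z ≠ y) ∧ z = v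
    · rw [if_pos (hcond.2 hc), if_pos hc, pathProb_snoc]
    · rw [if_neg (fun hh => hc (hcond.1 hh)), if_neg hc]
  rw [Finset.sum_congr rfl fun q _ => Finset.sum_congr rfl fun z _ => hterm q z]
  by_cases hvy : v = y
  · rw [if_pos hvy]
    apply Finset.sum_eq_zero; intro q _
    apply Finset.sum_eq_zero; intro z _
    rw [if_neg]
    rintro ⟨⟨-, hzy⟩, hzv⟩
    exact hzy (hzv.trans hvy)
  · rw [if_neg hvy, ← sum_by_last G x y (fun u => stepP G u v)]
    apply Finset.sum_congr rfl; intro q _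
    have hterm2 : ∀ z, (if (okPath x y q ∧ z ≠ y) ∧ z = v
          then pathProb G q * stepP G (q (Fin.last t)) z else 0)
        = if z = v then (if okPath x y q then pathProb G q * stepP G (q (Fin.last t)) z else 0)
            else 0 := by
      intro z
      by_cases hz : z = v
      · rw [if_pos hz]
        by_cases hok : okPath x y q
        · rw [if_pos ⟨⟨hok, fun hh => hvy (hz.symm.trans hh)⟩, hz⟩, if_pos hok]
        · rw [if_neg (fun hh => hok hh.1.1), if_neg hok]
      · rw [if_neg (fun hh => hz hh.2), if_neg hz]
    rw [Finset.sum_congr rfl fun z _ => hterm2 z,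
      Finset.sum_ite_eq' Finset.univ v
        (fun z => if okPath x y q then pathProb G q * stepP G (q (Fin.last t)) z else 0),
      if_pos (Finset.mem_univ _)]

lemma hitProb_succ (G : SimpleGraph V) (x y : V) (hxy : x ≠ y) {t : ℕ} :
    hitProb G x y (t + 1) = ∑ u, aOcc G x y t u * stepP G u y := by
  classical
  rw [hitProb, tsum_fintype,
    sum_snoc (fun p : Fin (t + 2) → V =>
      if p 0 = x ∧ p (Fin.last (t + 1)) = y ∧
          (∀ i : Fin (t + 2), i ≠ 0 → i ≠ Fin.last (t + 1) → p i ≠ y)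
        then pathProb G p else 0)]
  have hterm : ∀ (q : Fin (t + 1) → V) (z : V),
      (if (Fin.snoc q z : Fin (t + 2) → V) 0 = x ∧
          (Fin.snoc q z : Fin (t + 2) → V) (Fin.last (t + 1)) = y ∧
          (∀ i : Fin (t + 2), i ≠ 0 → i ≠ Fin.last (t + 1) →
            (Fin.snoc q z : Fin (t + 2) → V) i ≠ y)
        then pathProb G (Fin.snoc q z) else 0)
      = if z = y then (if okPath x y q
          then pathProb G q * stepP G (q (Fin.last t)) z else 0) else 0 := by
    intro q z
    have hq0 : (Fin.snoc q z : Fin (t + 2) → V) 0 = q 0 := by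
      rw [← Fin.castSucc_zero, Fin.snoc_castSucc]
    have hcond : ((Fin.snoc q z : Fin (t + 2) → V) 0 = x ∧
        (Fin.snoc q z : Fin (t + 2) → V) (Fin.last (t + 1)) = y ∧
        (∀ i : Fin (t + 2), i ≠ 0 → i ≠ Fin.last (t + 1) →
          (Fin.snoc q z : Fin (t + 2) → V) i ≠ y))
        ↔ (okPath x y q ∧ z = y) := by
      rw [hq0, Fin.snoc_last]
      constructor
      · rintro ⟨h0, hz, hint⟩
        refine ⟨⟨h0, ?_⟩, hz⟩
        intro j hj
        have := hint j.castSucc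
          (by rw [Ne, Fin.castSucc_eq_zero_iff]; exact hj)
          (Fin.castSucc_lt_last j).ne
        rwa [Fin.snoc_castSucc] at this
      · rintro ⟨⟨h0, hint⟩, hz⟩
        refine ⟨h0, hz, ?_⟩
        intro i hi0 hil
        refine Fin.lastCases ?_ ?_ i hi0 hil
        · intro _ hc
          exact absurd rfl hc
        · intro j hj _
          rw [Fin.snoc_castSucc]
          apply hint
          intro hc
          exact hj (by rw [hc, Fin.castSucc_zero])
    by_cases hz : z = y
    · rw [if_pos hz]
      by_cases hok : okPath x y q
      · rw [if_pos (hcond.2 ⟨hok, hz⟩), if_pos hok, pathProb_snoc]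
      · rw [if_neg (fun hh => hok (hcond.1 hh).1), if_neg hok]
    · rw [if_neg (fun hh => hz (hcond.1 hh).2), if_neg hz]
  rw [Finset.sum_congr rfl fun q _ => Finset.sum_congr rfl fun z _ => hterm q z]
  have hinner : ∀ q : Fin (t + 1) → V,
      (∑ z, if z = y then (if okPath x y q
          then pathProb G q * stepP G (q (Fin.last t)) z else 0) else 0)
      = if okPath x y q then pathProb G q * stepP G (q (Fin.last t)) y else 0 := by
    intro q
    rw [Finset.sum_ite_eq' Finset.univ y
      (fun z => if okPath x y q then pathProb G q * stepP G (q (Fin.last t)) z else 0),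
      if_pos (Finset.mem_univ _)]
  rw [Finset.sum_congr rfl fun q _ => hinner q, sum_by_last G x y (fun u => stepP G u y)]

lemma aOcc_y (G : SimpleGraph V) (x y : V) (hxy : x ≠ y) (t : ℕ) : aOcc G x y t y = 0 := by
  cases t with
  | zero => rw [aOcc_zero, if_neg (fun hh => hxy hh.symm)]
  | succ t => rw [aOcc_succ, if_pos rfl]

lemma aOcc_mass (G : SimpleGraph V) (hconn : G.Connected) (x y : V) (hxy : x ≠ y) (t : ℕ) :
    ∑ v, aOcc G x y t v ≤ 1 := by
  induction t with
  | zero =>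
    rw [Finset.sum_congr rfl fun v _ => aOcc_zero G x y v,
      Finset.sum_ite_eq' Finset.univ x (fun _ => (1:ℝ)), if_pos (Finset.mem_univ _)]
  | succ t ih =>
    calc ∑ v, aOcc G x y (t + 1) v
        ≤ ∑ v, ∑ u, aOcc G x y t u * stepP G u v := by
          apply Finset.sum_le_sum; intro v _
          rw [aOcc_succ]
          by_cases hv : v = y
          · rw [if_pos hv]
            apply Finset.sum_nonneg; intro u _
            exact mul_nonneg (aOcc_nonneg G x y t u) (stepP_nonneg G u v)
          · rw [if_neg hv]
      _ = ∑ u, aOcc G x y t u * ∑ v, stepP G u v := by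
          rw [Finset.sum_comm]
          apply Finset.sum_congr rfl; intro u _
          rw [Finset.mul_sum]
      _ = ∑ u, aOcc G x y t u := by
          apply Finset.sum_congr rfl; intro u _
          rw [stepP_rowsum G hconn hxy u, mul_one]
      _ ≤ 1 := ih

end Aux7
section Aux8
set_option linter.unusedSectionVars false
variable {V : Type} [Fintype V]

lemma pw_step (G : SimpleGraph V) (hconn : G.Connected) {x y : V} (hxy : x ≠ y)
    (h : V → ℝ)
    (hharm : ∀ v, v ≠ x → v ≠ y → dvg G h v = 0)
    (htq : ∀ v, v ≠ y → ∑ w, tq G h v w ≤ (deg G v : ℝ))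
    {v : V} (hvy : v ≠ y) :
    ∑ w, stepP G v w * (h x - h w)^2 ≤ (h x - h v)^2 + 1 := by
  classical
  have hD : (0:ℝ) < (deg G v : ℝ) := by exact_mod_cast deg_pos G hconn hxy v
  have hexp : ∀ w, stepP G v w * (h x - h w)^2
      = ((if G.Adj v w then (h x - h v)^2 else 0)
        + 2 * (h x - h v) * ew G h v w + tq G h v w) * ((deg G v : ℝ))⁻¹ := by
    intro w; unfold stepP ew tq
    by_cases hadj : G.Adj v w
    · rw [if_pos hadj, if_pos hadj, if_pos hadj, if_pos hadj]; ring
    · rw [if_neg hadj, if_neg hadj, if_neg hadj, if_neg hadj]; ring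
  rw [Finset.sum_congr rfl fun w _ => hexp w, ← Finset.sum_mul]
  have hs1 : ∑ w, (if G.Adj v w then (h x - h v)^2 else 0)
      = (h x - h v)^2 * (deg G v : ℝ) := by
    have hpt : ∀ w, (if G.Adj v w then (h x - h v)^2 else 0)
        = (h x - h v)^2 * (if G.Adj v w then (1:ℝ) else 0) := by
      intro w; by_cases hadj : G.Adj v w <;> simp [hadj]
    rw [Finset.sum_congr rfl fun w _ => hpt w, ← Finset.mul_sum, ← deg_cast]
  have hs2 : ∑ w, 2 * (h x - h v) * ew G h v w = 2 * (h x - h v) * dvg G h v := by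
    rw [← Finset.mul_sum]; rfl
  have hsplit : ∑ w, ((if G.Adj v w then (h x - h v)^2 else 0)
        + 2 * (h x - h v) * ew G h v w + tq G h v w)
      = (h x - h v)^2 * (deg G v : ℝ) + 2 * (h x - h v) * dvg G h v + ∑ w, tq G h v w := by
    rw [Finset.sum_add_distrib, Finset.sum_add_distrib, hs1, hs2]
  rw [hsplit]
  have hmid : 2 * (h x - h v) * dvg G h v = 0 := by
    by_cases hvx : v = x
    · rw [hvx]; ring_nf
    · rw [hharm v hvx hvy, mul_zero]
  rw [hmid, add_zero]
  have htqv := htq v hvy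
  calc ((h x - h v)^2 * (deg G v : ℝ) + ∑ w, tq G h v w) * ((deg G v : ℝ))⁻¹
      ≤ ((h x - h v)^2 * (deg G v : ℝ) + (deg G v : ℝ)) * ((deg G v : ℝ))⁻¹ := by
        apply mul_le_mul_of_nonneg_right _ (inv_nonneg.2 hD.le)
        linarith
    _ = (h x - h v)^2 + 1 := by field_simp

lemma key_bound (G : SimpleGraph V) (hconn : G.Connected) {x y : V} (hxy : x ≠ y)
    (h : V → ℝ) (hhy : h y = 0)
    (hharm : ∀ v, v ≠ x → v ≠ y → dvg G h v = 0)
    (htq : ∀ v, v ≠ y → ∑ w, tq G h v w ≤ (deg G v : ℝ)) :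
    ∀ t : ℕ, (h x)^2 * (∑ s ∈ Finset.Icc 1 t, hitProb G x y s)
      + ∑ v, aOcc G x y t v * (h x - h v)^2 ≤ t := by
  intro t
  induction t with
  | zero =>
    rw [show Finset.Icc 1 0 = (∅ : Finset ℕ) from Finset.Icc_eq_empty (by omega)]
    rw [Finset.sum_empty, mul_zero, zero_add]
    have hterm : ∀ v, aOcc G x y 0 v * (h x - h v)^2
        = if v = x then (h x - h v)^2 else 0 := by
      intro v
      rw [aOcc_zero]
      by_cases hv : v = x
      · rw [if_pos hv, if_pos hv, one_mul]
      · rw [if_neg hv, if_neg hv, zero_mul]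
    rw [Finset.sum_congr rfl fun v _ => hterm v,
      Finset.sum_ite_eq' Finset.univ x (fun v => (h x - h v)^2),
      if_pos (Finset.mem_univ _)]
    simp
  | succ t ih =>
    rw [Finset.sum_Icc_succ_top (by omega : 1 ≤ t + 1), hitProb_succ G x y hxy]
    have hthird : ∑ v, aOcc G x y (t+1) v * (h x - h v)^2
        = (∑ u, aOcc G x y t u * ∑ w, stepP G u w * (h x - h w)^2)
          - ∑ u, aOcc G x y t u * (stepP G u y * (h x - h y)^2) := by
      have e1 : ∀ v, aOcc G x y (t+1) v * (h x - h v)^2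
          = ∑ u, (if v = y then 0
              else aOcc G x y t u * (stepP G u v * (h x - h v)^2)) := by
        intro v
        rw [aOcc_succ]
        by_cases hv : v = y
        · rw [if_pos hv]
          rw [Finset.sum_congr rfl fun u _ => if_pos hv]
          rw [Finset.sum_const, smul_zero, zero_mul]
        · rw [if_neg hv, Finset.sum_mul]
          apply Finset.sum_congr rfl; intro u _
          rw [if_neg hv, mul_assoc]
      rw [Finset.sum_congr rfl fun v _ => e1 v, Finset.sum_comm]
      have e2 : ∀ u, ∑ v, (if v = y then 0
            else aOcc G x y t u * (stepP G u v * (h x - h v)^2))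
          = aOcc G x y t u * (∑ w, stepP G u w * (h x - h w)^2)
            - aOcc G x y t u * (stepP G u y * (h x - h y)^2) := by
        intro u
        have e3 : ∀ v, (if v = y then 0
              else aOcc G x y t u * (stepP G u v * (h x - h v)^2))
            = aOcc G x y t u * (stepP G u v * (h x - h v)^2)
              - (if v = y then aOcc G x y t u * (stepP G u v * (h x - h v)^2) else 0) := by
          intro v
          by_cases hv : v = y
          · rw [if_pos hv, if_pos hv, sub_self]
          · rw [if_neg hv, if_neg hv, sub_zero]
        rw [Finset.sum_congr rfl fun v _ => e3 v, Finset.sum_sub_distrib,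
          Finset.sum_ite_eq' Finset.univ y
            (fun v => aOcc G x y t u * (stepP G u v * (h x - h v)^2)),
          if_pos (Finset.mem_univ _), Finset.mul_sum]
      rw [Finset.sum_congr rfl fun u _ => e2 u, Finset.sum_sub_distrib]
    rw [hthird]
    have hc2 : ∑ u, aOcc G x y t u * (stepP G u y * (h x - h y)^2)
        = (h x)^2 * ∑ u, aOcc G x y t u * stepP G u y := by
      rw [Finset.mul_sum]
      apply Finset.sum_congr rfl; intro u _
      rw [hhy]; ring
    rw [hc2]
    have hbd : ∑ u, aOcc G x y t u * (∑ w, stepP G u w * (h x - h w)^2)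
        ≤ ∑ u, aOcc G x y t u * ((h x - h u)^2 + 1) := by
      apply Finset.sum_le_sum; intro u _
      by_cases hu : u = y
      · rw [hu, aOcc_y G x y hxy, zero_mul, zero_mul]
      · exact mul_le_mul_of_nonneg_left
          (pw_step G hconn hxy h hharm htq hu) (aOcc_nonneg G x y t u)
    have hsum2 : ∑ u, aOcc G x y t u * ((h x - h u)^2 + 1)
        = ∑ u, aOcc G x y t u * (h x - h u)^2 + ∑ u, aOcc G x y t u := by
      rw [← Finset.sum_add_distrib]
      apply Finset.sum_congr rfl; intro u _
      ring
    have hmass := aOcc_mass G hconn x y hxy t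
    have hexpand : (h x)^2 * ((∑ s ∈ Finset.Icc 1 t, hitProb G x y s)
          + ∑ u, aOcc G x y t u * stepP G u y)
        = (h x)^2 * (∑ s ∈ Finset.Icc 1 t, hitProb G x y s)
          + (h x)^2 * ∑ u, aOcc G x y t u * stepP G u y := mul_add _ _ _
    push_cast
    linarith [ih, hbd, hsum2, hmass, hexpand]

end Aux8
/-- Lemma 2.1: on a finite graph, `P_x(τ_y ≤ ε R_eff(x ↔ y)²) ≤ ε`. -/
theorem hitting_time_resistance_lower {V : Type} [Fintype V] (G : SimpleGraph V)
    (hconn : G.Connected) (x y : V) (hxy : x ≠ y) (ε : ℝ) (hε : 0 < ε) :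
    ∀ t : ℕ, (t : ℝ) ≤ ε * (effRes G x y) ^ 2 →
      ∑ s ∈ Finset.Icc 1 t, hitProb G x y s ≤ ε := by
  intro t ht
  obtain ⟨h, hhx, hhy, hnn, hub, hCpos, hdx, hharm, htq⟩ := exists_good_h G hconn x y hxy
  have hkey := key_bound G hconn hxy h hhy hharm htq t
  rw [hhx] at hkey
  have hRpos : 0 < effRes G x y := by
    rw [effRes]; exact inv_pos.2 hCpos
  have hR2pos : 0 < (effRes G x y)^2 := pow_pos hRpos 2
  have hann : 0 ≤ ∑ v, aOcc G x y t v * (effRes G x y - h v)^2 :=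
    Finset.sum_nonneg fun v _ => mul_nonneg (aOcc_nonneg G x y t v) (sq_nonneg _)
  have h3 : (effRes G x y)^2 * (∑ s ∈ Finset.Icc 1 t, hitProb G x y s)
      ≤ (effRes G x y)^2 * ε := by
    have h4 : ε * (effRes G x y)^2 = (effRes G x y)^2 * ε := mul_comm _ _
    linarith
  exact le_of_mul_le_mul_left h3 hR2pos

end RW
end

section
/- For the simple random walk on an infinite connected locally finite graph started at v, for every t ≥ 3 one has P_v(τ_v = t) ≤ P_v(τ_v = t − 1) whenever t is odd. -/
open scoped BigOperators

namespace RW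

attribute [local instance] Classical.propDecidable

variable {V : Type*}

section Aux

open ENNReal

variable (G : SimpleGraph V) (v : V)

/-- square root of the degree, in `ℝ≥0∞`. -/
noncomputable def sq (x : V) : ℝ≥0∞ := (NNReal.sqrt (deg G x) : ℝ≥0∞)

lemma sq_ne_top (x : V) : sq G x ≠ ⊤ := ENNReal.coe_ne_top

lemma sq_mul_sq (x : V) : sq G x * sq G x = (deg G x : ℝ≥0∞) := by
  rw [sq, ← ENNReal.coe_mul, NNReal.mul_self_sqrt]
  simp

lemma inv_sq_mul_inv_sq (x : V) : (sq G x)⁻¹ * (sq G x)⁻¹ = ((deg G x : ℝ≥0∞))⁻¹ := by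
  rw [← ENNReal.mul_inv (Or.inr (sq_ne_top G x)) (Or.inl (sq_ne_top G x)), sq_mul_sq]

/-- symmetrized edge kernel of the walk killed at `v`. -/
noncomputable def ME (x y : V) : ℝ≥0∞ :=
  if G.Adj x y ∧ x ≠ v ∧ y ≠ v then (sq G x)⁻¹ * (sq G y)⁻¹ else 0

lemma ME_symm (x y : V) : ME G v x y = ME G v y x := by
  unfold ME
  by_cases h : G.Adj x y ∧ x ≠ v ∧ y ≠ v
  · rw [if_pos h, if_pos ⟨h.1.symm, h.2.2, h.2.1⟩, mul_comm]
  · rw [if_neg h, if_neg (fun hc => h ⟨hc.1.symm, hc.2.2, hc.2.1⟩)]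

/-- half-path vector: weighted sum over paths of length `k` started next to `v`. -/
noncomputable def fE : ℕ → V → ℝ≥0∞
  | 0, a => if G.Adj v a then (sq G a)⁻¹ else 0
  | (k+1), a => ∑' b, fE k b * ME G v b a

noncomputable def pathE {t : ℕ} (p : Fin (t + 1) → V) : ℝ≥0∞ :=
  if ∀ i : Fin t, G.Adj (p i.castSucc) (p i.succ)
  then ∏ i : Fin t, ((deg G (p i.castSucc) : ℝ≥0∞))⁻¹ else 0

noncomputable def hitE (t : ℕ) : ℝ≥0∞ :=
  ∑' p : Fin (t + 1) → V,
    if p 0 = v ∧ p (Fin.last t) = v ∧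
        (∀ i : Fin (t + 1), i ≠ 0 → i ≠ Fin.last t → p i ≠ v)
    then pathE G p else 0

end Aux

section Aux2

open ENNReal

variable {V : Type*} (G : SimpleGraph V) (v : V)

lemma snoc_zero' {k : ℕ} (q : Fin (k+1) → V) (b : V) : (Fin.snoc q b : Fin (k+2) → V) 0 = q 0 := by
  rw [show (0 : Fin (k+2)) = Fin.castSucc 0 from rfl, Fin.snoc_castSucc]

lemma tsum_half : ∀ (k : ℕ) (a : V),
    (∑' q : Fin (k+1) → V, if q (Fin.last k) = a
      then fE G v 0 (q 0) * ∏ i : Fin k, ME G v (q i.castSucc) (q i.succ) else 0)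
    = fE G v k a := by
  intro k
  induction k with
  | zero =>
    intro a
    rw [← (Equiv.funUnique (Fin 1) V).symm.tsum_eq]
    simp only [Equiv.funUnique_symm_apply]
    rw [tsum_eq_single a]
    · simp
    · intro b hb
      simp [if_neg hb]
  | succ k ih =>
    intro a
    rw [← (Fin.snocEquiv (fun _ : Fin (k+2) => V)).tsum_eq]
    rw [ENNReal.tsum_prod']
    have hval : ∀ (b : V) (q : Fin (k+1) → V),
        (Fin.snocEquiv (fun _ : Fin (k+2) => V) (b, q)) = Fin.snoc q b := by
      intro b q; funext i; rfl
    simp only [hval]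
    rw [tsum_eq_single a]
    · have hterm : ∀ q : Fin (k+1) → V,
          (if (Fin.snoc q a : Fin (k+2) → V) (Fin.last (k+1)) = a
            then fE G v 0 ((Fin.snoc q a : Fin (k+2) → V) 0) *
              ∏ i : Fin (k+1), ME G v ((Fin.snoc q a : Fin (k+2) → V) i.castSucc)
                ((Fin.snoc q a : Fin (k+2) → V) i.succ) else 0)
          = ∑' c, (if q (Fin.last k) = c
              then fE G v 0 (q 0) * ∏ i : Fin k, ME G v (q i.castSucc) (q i.succ) else 0)
              * ME G v c a := by
        intro q
        rw [Fin.snoc_last, if_pos rfl, snoc_zero']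
        rw [Fin.prod_univ_castSucc]
        have h1 : ∀ i : Fin k,
            (Fin.snoc q a : Fin (k+2) → V) (i.castSucc).castSucc = q i.castSucc := by
          intro i; rw [Fin.snoc_castSucc]
        have h2 : ∀ i : Fin k,
            (Fin.snoc q a : Fin (k+2) → V) (i.castSucc).succ = q i.succ := by
          intro i; rw [Fin.succ_castSucc, Fin.snoc_castSucc]
        have h3 : (Fin.snoc q a : Fin (k+2) → V) ((Fin.last k).castSucc) = q (Fin.last k) := by
          rw [Fin.snoc_castSucc]
        have h4 : (Fin.snoc q a : Fin (k+2) → V) ((Fin.last k).succ) = a := by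
          rw [Fin.succ_last, Fin.snoc_last]
        simp only [h1, h2, h3, h4]
        rw [tsum_eq_single (q (Fin.last k))]
        · rw [if_pos rfl]; ring
        · intro c hc
          rw [if_neg (fun h => hc h.symm), zero_mul]
      calc ∑' q : Fin (k+1) → V, _ = ∑' (q : Fin (k+1) → V) (c : V),
            (if q (Fin.last k) = c
              then fE G v 0 (q 0) * ∏ i : Fin k, ME G v (q i.castSucc) (q i.succ) else 0)
              * ME G v c a := tsum_congr hterm
        _ = ∑' (c : V) (q : Fin (k+1) → V),
            (if q (Fin.last k) = c
              then fE G v 0 (q 0) * ∏ i : Fin k, ME G v (q i.castSucc) (q i.succ) else 0)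
              * ME G v c a := ENNReal.tsum_comm
        _ = ∑' c : V, (∑' q : Fin (k+1) → V,
            if q (Fin.last k) = c
              then fE G v 0 (q 0) * ∏ i : Fin k, ME G v (q i.castSucc) (q i.succ) else 0)
              * ME G v c a := by
            exact tsum_congr fun c => ENNReal.tsum_mul_right
        _ = ∑' c : V, fE G v k c * ME G v c a := by
            exact tsum_congr fun c => by rw [ih c]
        _ = fE G v (k+1) a := rfl
    · intro b hb
      rw [ENNReal.summable.tsum_eq_zero_iff]
      intro q
      rw [Fin.snoc_last, if_neg hb]

end Aux2
section Aux3

open ENNReal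

variable {V : Type*} (G : SimpleGraph V) (v : V)

lemma teleProd : ∀ (m : ℕ) (q : Fin (m+1) → V),
    (sq G (q 0))⁻¹ *
      (∏ e : Fin m, (sq G (q e.castSucc))⁻¹ * (sq G (q e.succ))⁻¹) *
      (sq G (q (Fin.last m)))⁻¹
    = ∏ r : Fin (m+1), ((deg G (q r) : ℝ≥0∞))⁻¹ := by
  intro m
  induction m with
  | zero =>
    intro q
    have : (Fin.last 0) = (0 : Fin 1) := rfl
    simp [this, inv_sq_mul_inv_sq G (q 0)]
  | succ m ih =>
    intro q
    rw [Fin.prod_univ_castSucc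
        (f := fun e : Fin (m+1) => (sq G (q e.castSucc))⁻¹ * (sq G (q e.succ))⁻¹),
      Fin.prod_univ_castSucc (f := fun r : Fin (m+2) => ((deg G (q r) : ℝ≥0∞))⁻¹),
      ← ih (fun r => q r.castSucc)]
    simp only [Fin.succ_castSucc, Fin.castSucc_zero, Fin.succ_last]
    rw [← inv_sq_mul_inv_sq G (q (Fin.last (m+1)))]
    ring

lemma point_eq (m : ℕ) (q : Fin (m+1) → V) :
    (if (Fin.cons v (Fin.snoc q v) : Fin (m+3) → V) 0 = v ∧
        (Fin.cons v (Fin.snoc q v) : Fin (m+3) → V) (Fin.last (m+2)) = v ∧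
        (∀ i : Fin (m+3), i ≠ 0 → i ≠ Fin.last (m+2) →
          (Fin.cons v (Fin.snoc q v) : Fin (m+3) → V) i ≠ v)
     then pathE G (Fin.cons v (Fin.snoc q v) : Fin (m+3) → V) else 0)
    = ((deg G v : ℝ≥0∞))⁻¹ *
      (fE G v 0 (q 0) * (∏ e : Fin m, ME G v (q e.castSucc) (q e.succ)) *
        fE G v 0 (q (Fin.last m))) := by
  set p : Fin (m+3) → V := Fin.cons v (Fin.snoc q v) with hpdef
  have hp0 : p 0 = v := by rw [hpdef]; exact Fin.cons_zero _ _
  have hpsucc : ∀ i : Fin (m+2), p i.succ = (Fin.snoc q v : Fin (m+2) → V) i := fun i => by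
    rw [hpdef]; exact Fin.cons_succ (α := fun _ : Fin (m+3) => V) v (Fin.snoc q v) i
  have hplast : p (Fin.last (m+2)) = v := by
    rw [show Fin.last (m+2) = (Fin.last (m+1)).succ from rfl, hpsucc, Fin.snoc_last]
  have hpq : ∀ j : Fin (m+1), p (j.castSucc).succ = q j := fun j => by
    rw [hpsucc, Fin.snoc_castSucc]
  -- evaluation of chain endpoints
  have hB : p ((0 : Fin (m+2)).succ) = q 0 := hpq 0
  have hCl : ∀ e : Fin m, p ((((e.castSucc).succ : Fin (m+2))).castSucc) = q e.castSucc :=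
    fun e => hpq e.castSucc
  have hCr : ∀ e : Fin m, p ((((e.castSucc).succ : Fin (m+2))).succ) = q e.succ :=
    fun e => hpq e.succ
  have hDl : p ((Fin.last (m+1) : Fin (m+2)).castSucc) = q (Fin.last m) := hpq (Fin.last m)
  have hDr : p ((Fin.last (m+1) : Fin (m+2)).succ) = v := hplast
  -- interior condition
  have hint : (∀ i : Fin (m+3), i ≠ 0 → i ≠ Fin.last (m+2) → p i ≠ v) ↔
      (∀ r : Fin (m+1), q r ≠ v) := by
    constructor
    · intro h r
      have hne0 : ((r.castSucc).succ : Fin (m+3)) ≠ 0 := Fin.succ_ne_zero _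
      have hnel : ((r.castSucc).succ : Fin (m+3)) ≠ Fin.last (m+2) := by
        rw [show Fin.last (m+2) = (Fin.last (m+1)).succ from rfl]
        intro hc
        exact (Fin.castSucc_lt_last r).ne (Fin.succ_injective _ hc)
      have := h _ hne0 hnel
      rwa [hpq] at this
    · intro h i hi0 hil
      rcases Fin.eq_zero_or_eq_succ i with h0 | ⟨j, rfl⟩
      · exact absurd h0 hi0
      rcases Fin.eq_castSucc_or_eq_last j with ⟨e, rfl⟩ | rfl
      · rw [hpq]; exact h e
      · exact absurd rfl hil
  -- chain condition
  have hchain : (∀ i : Fin (m+2), G.Adj (p i.castSucc) (p i.succ)) ↔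
      (G.Adj v (q 0) ∧ (∀ e : Fin m, G.Adj (q e.castSucc) (q e.succ)) ∧
        G.Adj (q (Fin.last m)) v) := by
    constructor
    · intro h
      refine ⟨?_, fun e => ?_, ?_⟩
      · have := h 0
        rwa [show ((0 : Fin (m+2)).castSucc) = (0 : Fin (m+3)) from rfl, hp0, hB] at this
      · have := h ((e.castSucc).succ)
        rwa [hCl, hCr] at this
      · have := h (Fin.last (m+1))
        rwa [hDl, hDr] at this
    · rintro ⟨h1, h2, h3⟩ i
      rcases Fin.eq_zero_or_eq_succ i with rfl | ⟨j, rfl⟩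
      · rwa [show ((0 : Fin (m+2)).castSucc) = (0 : Fin (m+3)) from rfl, hp0, hB]
      rcases Fin.eq_castSucc_or_eq_last j with ⟨e, rfl⟩ | rfl
      · rw [hCl, hCr]; exact h2 e
      · have d1 : p ((Fin.last m).succ.castSucc) = q (Fin.last m) := hDl
        have d2 : p ((Fin.last m).succ.succ) = v := hDr
        rw [d1, d2]; exact h3
  by_cases h4 : ∀ r : Fin (m+1), q r ≠ v
  · rw [if_pos ⟨hp0, hplast, hint.mpr h4⟩]
    by_cases hc : G.Adj v (q 0) ∧ (∀ e : Fin m, G.Adj (q e.castSucc) (q e.succ)) ∧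
        G.Adj (q (Fin.last m)) v
    · -- everything holds
      rw [pathE, if_pos (hchain.mpr hc)]
      have hprod : ∏ i : Fin (m+2), ((deg G (p i.castSucc) : ℝ≥0∞))⁻¹
          = ((deg G v : ℝ≥0∞))⁻¹ * ∏ r : Fin (m+1), ((deg G (q r) : ℝ≥0∞))⁻¹ := by
        rw [Fin.prod_univ_succ (f := fun i : Fin (m+2) => ((deg G (p i.castSucc) : ℝ≥0∞))⁻¹)]
        refine congrArg₂ (· * ·) ?_ ?_
        · exact congrArg (fun x => ((deg G x : ℝ≥0∞))⁻¹)
            (show p ((0 : Fin (m+2)).castSucc) = v from hp0)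
        · exact Finset.prod_congr rfl fun j _ => congrArg (fun x => ((deg G x : ℝ≥0∞))⁻¹)
            (show p ((j.succ : Fin (m+2)).castSucc) = q j from hpq j)
      rw [hprod]
      congr 1
      rw [← teleProd G m q]
      have hf0 : fE G v 0 (q 0) = (sq G (q 0))⁻¹ := by
        show (if G.Adj v (q 0) then (sq G (q 0))⁻¹ else 0) = _
        rw [if_pos hc.1]
      have hfl : fE G v 0 (q (Fin.last m)) = (sq G (q (Fin.last m)))⁻¹ := by
        show (if G.Adj v (q (Fin.last m)) then (sq G (q (Fin.last m)))⁻¹ else 0) = _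
        rw [if_pos hc.2.2.symm]
      rw [hf0, hfl]
      congr 1
      congr 1
      refine Finset.prod_congr rfl fun e _ => ?_
      rw [ME, if_pos ⟨hc.2.1 e, h4 _, h4 _⟩]
    · -- chain fails: both sides zero
      rw [pathE, if_neg (fun hcc => hc (hchain.mp hcc))]
      push_neg at hc
      by_cases h1 : G.Adj v (q 0)
      · by_cases h2 : ∀ e : Fin m, G.Adj (q e.castSucc) (q e.succ)
        · have h3 := hc h1 h2
          have : fE G v 0 (q (Fin.last m)) = 0 := by
            show (if G.Adj v (q (Fin.last m)) then (sq G (q (Fin.last m)))⁻¹ else 0) = 0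
            rw [if_neg (fun ha => h3 ha.symm)]
          rw [this, mul_zero, mul_zero]
        · push_neg at h2
          obtain ⟨e, he⟩ := h2
          have : ∏ e : Fin m, ME G v (q e.castSucc) (q e.succ) = 0 :=
            Finset.prod_eq_zero (Finset.mem_univ e) (by rw [ME, if_neg (fun hx => he hx.1)])
          rw [this, mul_zero, zero_mul, mul_zero]
      · have : fE G v 0 (q 0) = 0 := by
          show (if G.Adj v (q 0) then (sq G (q 0))⁻¹ else 0) = 0
          rw [if_neg h1]
        rw [this, zero_mul, zero_mul, mul_zero]
  · -- some interior vertex equals v : both sides zero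
    rw [if_neg (fun hcc => h4 (hint.mp hcc.2.2))]
    push_neg at h4
    obtain ⟨r, hr⟩ := h4
    rcases Fin.eq_zero_or_eq_succ r with rfl | ⟨e, rfl⟩
    · have : fE G v 0 (q 0) = 0 := by
        show (if G.Adj v (q 0) then (sq G (q 0))⁻¹ else 0) = 0
        rw [if_neg (fun ha => G.irrefl (hr ▸ ha))]
      rw [this, zero_mul, zero_mul, mul_zero]
    · have : ∏ e' : Fin m, ME G v (q e'.castSucc) (q e'.succ) = 0 :=
        Finset.prod_eq_zero (Finset.mem_univ e) (by rw [ME, if_neg (fun hx => hx.2.2 hr)])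
      rw [this, mul_zero, zero_mul, mul_zero]

end Aux3
section Aux4

open ENNReal

variable {V : Type*} (G : SimpleGraph V) (v : V)

lemma hitE_eq (m : ℕ) :
    hitE G v (m+2) = ((deg G v : ℝ≥0∞))⁻¹ * ∑' a, fE G v m a * fE G v 0 a := by
  have japply : ∀ (q : Fin (m+1) → V) (i : Fin (m+1)),
      (Fin.cons v (Fin.snoc q v) : Fin (m+3) → V) ((i.castSucc).succ) = q i := by
    intro q i
    have h1 := Fin.cons_succ (α := fun _ : Fin (m+3) => V) v (Fin.snoc q v) i.castSucc
    rw [h1, Fin.snoc_castSucc]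
  have hinj : Function.Injective
      (fun q : Fin (m+1) → V => (Fin.cons v (Fin.snoc q v) : Fin (m+3) → V)) := by
    intro q q' h
    funext i
    have := congrFun h ((i.castSucc).succ)
    simpa only [japply] using this
  have hsupp : Function.support (fun p : Fin (m+3) → V =>
      if p 0 = v ∧ p (Fin.last (m+2)) = v ∧
        (∀ i : Fin (m+3), i ≠ 0 → i ≠ Fin.last (m+2) → p i ≠ v)
      then pathE G p else 0) ⊆
      Set.range (fun q : Fin (m+1) → V => (Fin.cons v (Fin.snoc q v) : Fin (m+3) → V)) := by
    intro p hp
    have hcond : p 0 = v ∧ p (Fin.last (m+2)) = v ∧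
        (∀ i : Fin (m+3), i ≠ 0 → i ≠ Fin.last (m+2) → p i ≠ v) := by
      by_contra hc
      exact hp (if_neg hc)
    refine ⟨fun i => p ((i.castSucc).succ), ?_⟩
    funext i
    rcases Fin.eq_zero_or_eq_succ i with rfl | ⟨i', rfl⟩
    · show (Fin.cons v (Fin.snoc (fun i => p ((i.castSucc).succ)) v) : Fin (m+3) → V) 0 = p 0
      rw [Fin.cons_zero, hcond.1]
    rcases Fin.eq_castSucc_or_eq_last i' with ⟨e, rfl⟩ | rfl
    · exact japply _ e
    · show (Fin.cons v (Fin.snoc (fun i => p ((i.castSucc).succ)) v) : Fin (m+3) → V)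
          (Fin.last (m+1)).succ = p (Fin.last (m+1)).succ
      have hl : (Fin.cons v (Fin.snoc (fun i => p ((i.castSucc).succ)) v) : Fin (m+3) → V)
          (Fin.last (m+1)).succ = v := by
        rw [Fin.cons_succ (α := fun _ : Fin (m+3) => V), Fin.snoc_last]
      rw [hl, show p ((Fin.last (m+1)).succ) = v from hcond.2.1]
  have key := Function.Injective.tsum_eq hinj
    (f := fun p : Fin (m+3) → V =>
      if p 0 = v ∧ p (Fin.last (m+2)) = v ∧
        (∀ i : Fin (m+3), i ≠ 0 → i ≠ Fin.last (m+2) → p i ≠ v)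
      then pathE G p else 0) hsupp
  calc hitE G v (m+2)
      = ∑' p : Fin (m+3) → V,
        (if p 0 = v ∧ p (Fin.last (m+2)) = v ∧
          (∀ i : Fin (m+3), i ≠ 0 → i ≠ Fin.last (m+2) → p i ≠ v)
         then pathE G p else 0) := rfl
    _ = ∑' q : Fin (m+1) → V,
        (if (Fin.cons v (Fin.snoc q v) : Fin (m+3) → V) 0 = v ∧
          (Fin.cons v (Fin.snoc q v) : Fin (m+3) → V) (Fin.last (m+2)) = v ∧
          (∀ i : Fin (m+3), i ≠ 0 → i ≠ Fin.last (m+2) →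
            (Fin.cons v (Fin.snoc q v) : Fin (m+3) → V) i ≠ v)
         then pathE G (Fin.cons v (Fin.snoc q v) : Fin (m+3) → V) else 0) := key.symm
    _ = ∑' q : Fin (m+1) → V, ((deg G v : ℝ≥0∞))⁻¹ *
          (fE G v 0 (q 0) * (∏ e : Fin m, ME G v (q e.castSucc) (q e.succ)) *
            fE G v 0 (q (Fin.last m))) := tsum_congr fun q => point_eq G v m q
    _ = ((deg G v : ℝ≥0∞))⁻¹ * ∑' q : Fin (m+1) → V,
          (fE G v 0 (q 0) * (∏ e : Fin m, ME G v (q e.castSucc) (q e.succ)) *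
            fE G v 0 (q (Fin.last m))) := ENNReal.tsum_mul_left
    _ = ((deg G v : ℝ≥0∞))⁻¹ * ∑' a, fE G v m a * fE G v 0 a := by
        congr 1
        calc ∑' q : Fin (m+1) → V,
            (fE G v 0 (q 0) * (∏ e : Fin m, ME G v (q e.castSucc) (q e.succ)) *
              fE G v 0 (q (Fin.last m)))
            = ∑' (q : Fin (m+1) → V) (a : V),
              (if q (Fin.last m) = a
                then fE G v 0 (q 0) * ∏ e : Fin m, ME G v (q e.castSucc) (q e.succ) else 0) *
              fE G v 0 a := by
              refine tsum_congr fun q => ?_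
              rw [tsum_eq_single (q (Fin.last m))]
              · rw [if_pos rfl]
              · intro a ha
                rw [if_neg (fun h => ha h.symm), zero_mul]
          _ = ∑' (a : V) (q : Fin (m+1) → V),
              (if q (Fin.last m) = a
                then fE G v 0 (q 0) * ∏ e : Fin m, ME G v (q e.castSucc) (q e.succ) else 0) *
              fE G v 0 a := ENNReal.tsum_comm
          _ = ∑' a : V, (∑' q : Fin (m+1) → V,
              if q (Fin.last m) = a
                then fE G v 0 (q 0) * ∏ e : Fin m, ME G v (q e.castSucc) (q e.succ) else 0) *
              fE G v 0 a := tsum_congr fun a => ENNReal.tsum_mul_right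
          _ = ∑' a, fE G v m a * fE G v 0 a :=
              tsum_congr fun a => by rw [tsum_half G v m a]

end Aux4
section Aux5

open ENNReal

variable {V : Type*} (G : SimpleGraph V) (v : V)

lemma fE_succ (k : ℕ) (a : V) : fE G v (k+1) a = ∑' b, fE G v k b * ME G v b a := rfl

lemma shift1 (k l : ℕ) :
    ∑' a, fE G v (k+1) a * fE G v l a = ∑' a, fE G v k a * fE G v (l+1) a := by
  calc ∑' a, fE G v (k+1) a * fE G v l a
      = ∑' (a : V) (b : V), fE G v k b * ME G v b a * fE G v l a := by
        refine tsum_congr fun a => ?_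
        rw [fE_succ, ENNReal.tsum_mul_right]
    _ = ∑' (b : V) (a : V), fE G v k b * ME G v b a * fE G v l a := ENNReal.tsum_comm
    _ = ∑' b : V, fE G v k b * ∑' a : V, fE G v l a * ME G v a b := by
        refine tsum_congr fun b => ?_
        rw [← ENNReal.tsum_mul_left]
        refine tsum_congr fun a => ?_
        rw [ME_symm G v b a]; ring
    _ = ∑' b, fE G v k b * fE G v (l+1) b := by
        refine tsum_congr fun b => ?_
        rw [fE_succ]

lemma shiftn (l : ℕ) : ∀ (k j : ℕ),
    ∑' a, fE G v (k+l) a * fE G v j a = ∑' a, fE G v k a * fE G v (j+l) a := by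
  induction l with
  | zero => intro k j; rfl
  | succ l ih =>
    intro k j
    have h1 : k + (l+1) = (k+l) + 1 := by ring
    rw [show (∑' a, fE G v (k+(l+1)) a * fE G v j a)
        = ∑' a, fE G v ((k+l)+1) a * fE G v j a by rw [h1]]
    rw [shift1 G v (k+l) j, ih k (j+1)]
    have h2 : j + 1 + l = j + (l+1) := by ring
    rw [h2]

lemma two_mul_le_sq_add (x y : ℝ≥0∞) : 2 * (x * y) ≤ x * x + y * y := by
  rcases le_total x y with h | h
  · obtain ⟨d, rfl⟩ := exists_add_of_le h
    have he : x * x + (x + d) * (x + d) = 2 * (x * (x + d)) + d * d := by ring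
    rw [he]
    exact le_self_add
  · obtain ⟨d, rfl⟩ := exists_add_of_le h
    have he : (y + d) * (y + d) + y * y = 2 * ((y + d) * y) + d * d := by ring
    rw [he]
    exact le_self_add

lemma stepD (hloc : LocFin G) (k : ℕ) :
    ∑' a, fE G v (k+1) a * fE G v k a ≤ ∑' a, fE G v k a * fE G v k a := by
  set N : V → V → ℝ≥0∞ := fun a b =>
    if G.Adj a b ∧ a ≠ v ∧ b ≠ v then ((deg G a : ℝ≥0∞))⁻¹ else 0 with hN
  have hNle : ∀ a, (∑' b, N a b) ≤ 1 := by
    intro a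
    have hle : ∀ b, N a b ≤ (if G.Adj a b then ((deg G a : ℝ≥0∞))⁻¹ else 0) := by
      intro b
      simp only [hN]
      by_cases h : G.Adj a b ∧ a ≠ v ∧ b ≠ v
      · rw [if_pos h, if_pos h.1]
      · rw [if_neg h]
        exact zero_le
    refine le_trans (ENNReal.tsum_le_tsum hle) ?_
    have hsum : (∑' b, if G.Adj a b then ((deg G a : ℝ≥0∞))⁻¹ else 0)
        = ∑ b ∈ (hloc a).toFinset, (if G.Adj a b then ((deg G a : ℝ≥0∞))⁻¹ else 0) := by
      refine tsum_eq_sum fun b hb => ?_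
      rw [if_neg]
      intro hadj
      exact hb ((hloc a).mem_toFinset.mpr ((G.mem_neighborSet a b).mpr hadj))
    rw [hsum]
    have hcard : (hloc a).toFinset.card = deg G a := by
      rw [deg, Nat.card_coe_set_eq, Set.ncard_eq_toFinset_card _ (hloc a)]
    calc ∑ b ∈ (hloc a).toFinset, (if G.Adj a b then ((deg G a : ℝ≥0∞))⁻¹ else 0)
        = ∑ b ∈ (hloc a).toFinset, ((deg G a : ℝ≥0∞))⁻¹ := by
          refine Finset.sum_congr rfl fun b hb => ?_
          have hadj : G.Adj a b := (G.mem_neighborSet a b).mp ((hloc a).mem_toFinset.mp hb)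
          rw [if_pos hadj]
      _ = ((hloc a).toFinset.card : ℝ≥0∞) * ((deg G a : ℝ≥0∞))⁻¹ := by
          rw [Finset.sum_const, nsmul_eq_mul]
      _ = (deg G a : ℝ≥0∞) * ((deg G a : ℝ≥0∞))⁻¹ := by rw [hcard]
      _ ≤ 1 := ENNReal.mul_inv_le_one _
  have htw : ∀ a b : V, 2 * (fE G v k b * ME G v b a * fE G v k a) ≤
      N b a * (fE G v k b * fE G v k b) + N a b * (fE G v k a * fE G v k a) := by
    intro a b
    by_cases h : G.Adj b a ∧ b ≠ v ∧ a ≠ v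
    · have hME : ME G v b a = (sq G b)⁻¹ * (sq G a)⁻¹ := by rw [ME, if_pos h]
      have hNba : N b a = (sq G b)⁻¹ * (sq G b)⁻¹ := by
        simp only [hN]
        rw [if_pos h, inv_sq_mul_inv_sq]
      have hNab : N a b = (sq G a)⁻¹ * (sq G a)⁻¹ := by
        simp only [hN]
        rw [if_pos ⟨h.1.symm, h.2.2, h.2.1⟩, inv_sq_mul_inv_sq]
      calc 2 * (fE G v k b * ME G v b a * fE G v k a)
          = 2 * (((sq G b)⁻¹ * fE G v k b) * ((sq G a)⁻¹ * fE G v k a)) := by rw [hME]; ring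
        _ ≤ ((sq G b)⁻¹ * fE G v k b) * ((sq G b)⁻¹ * fE G v k b) +
            ((sq G a)⁻¹ * fE G v k a) * ((sq G a)⁻¹ * fE G v k a) := two_mul_le_sq_add _ _
        _ = N b a * (fE G v k b * fE G v k b) + N a b * (fE G v k a * fE G v k a) := by rw [hNba, hNab]; ring
    · have hME : ME G v b a = 0 := by rw [ME, if_neg h]
      rw [hME]
      simp
  have h1 : ∑' a, fE G v (k+1) a * fE G v k a = ∑' (a : V) (b : V), fE G v k b * ME G v b a * fE G v k a := by
    refine tsum_congr fun a => ?_
    rw [fE_succ, ENNReal.tsum_mul_right]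
  have h2 : 2 * ∑' a, fE G v (k+1) a * fE G v k a ≤ 2 * ∑' a, fE G v k a * fE G v k a := by
    rw [h1, ← ENNReal.tsum_mul_left]
    calc ∑' a : V, 2 * ∑' b : V, fE G v k b * ME G v b a * fE G v k a
        = ∑' (a : V) (b : V), 2 * (fE G v k b * ME G v b a * fE G v k a) := by
          refine tsum_congr fun a => ?_
          rw [← ENNReal.tsum_mul_left]
      _ ≤ ∑' (a : V) (b : V), (N b a * (fE G v k b * fE G v k b) + N a b * (fE G v k a * fE G v k a)) :=
          ENNReal.tsum_le_tsum fun a => ENNReal.tsum_le_tsum fun b => htw a b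
      _ = (∑' (a : V) (b : V), N b a * (fE G v k b * fE G v k b)) + ∑' (a : V) (b : V), N a b * (fE G v k a * fE G v k a) := by
          rw [← ENNReal.tsum_add]
          exact tsum_congr fun a => ENNReal.tsum_add
      _ ≤ (∑' b, fE G v k b * fE G v k b) + ∑' a, fE G v k a * fE G v k a := by
          refine add_le_add ?_ ?_
          · rw [ENNReal.tsum_comm]
            refine ENNReal.tsum_le_tsum fun b => ?_
            calc ∑' a, N b a * (fE G v k b * fE G v k b) = (∑' a, N b a) * (fE G v k b * fE G v k b) :=
                  ENNReal.tsum_mul_right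
              _ ≤ 1 * (fE G v k b * fE G v k b) := mul_le_mul_left (hNle b) _
              _ = fE G v k b * fE G v k b := one_mul _
          · refine ENNReal.tsum_le_tsum fun a => ?_
            calc ∑' b, N a b * (fE G v k a * fE G v k a) = (∑' b, N a b) * (fE G v k a * fE G v k a) :=
                  ENNReal.tsum_mul_right
              _ ≤ 1 * (fE G v k a * fE G v k a) := mul_le_mul_left (hNle a) _
              _ = fE G v k a * fE G v k a := one_mul _
      _ = 2 * ∑' a, fE G v k a * fE G v k a := by ring
  have h2' := (ENNReal.mul_le_mul_iff_right (a := 2) (by norm_num) (by norm_num)).mp h2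
  exact h2'

end Aux5
section Aux6

open ENNReal

variable {V : Type*} (G : SimpleGraph V) (v : V)

lemma deg_pos_s8 (hloc : LocFin G) (hconn : G.Connected) [Nontrivial V] (x : V) :
    0 < deg G x := by
  obtain ⟨y, hy⟩ := exists_ne x
  obtain ⟨w⟩ := hconn.preconnected x y
  have hadj : ∃ z, G.Adj x z := by
    cases w with
    | nil => exact absurd rfl hy
    | cons h p => exact ⟨_, h⟩
  obtain ⟨z, hz⟩ := hadj
  haveI := (hloc x).to_subtype
  haveI : Nonempty (G.neighborSet x) := ⟨⟨z, hz⟩⟩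
  exact Nat.card_pos

noncomputable def ball (hloc : LocFin G) (v : V) : ℕ → Finset V
  | 0 => {v}
  | n+1 => (ball hloc v n) ∪ (ball hloc v n).biUnion (fun x => (hloc x).toFinset)

lemma ball_mono (hloc : LocFin G) {m n : ℕ} (h : m ≤ n) :
    ball G hloc v m ⊆ ball G hloc v n := by
  induction h with
  | refl => exact fun x hx => hx
  | step h ih => exact ih.trans Finset.subset_union_left

lemma mem_ball_of_path (hloc : LocFin G) {t : ℕ} (p : Fin (t+1) → V) (h0 : p 0 = v)
    (hadj : ∀ i : Fin t, G.Adj (p i.castSucc) (p i.succ)) :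
    ∀ i : Fin (t+1), p i ∈ ball G hloc v t := by
  have key : ∀ i : Fin (t+1), p i ∈ ball G hloc v (i : ℕ) := by
    intro i
    induction i using Fin.induction with
    | zero =>
      rw [h0]
      simp [ball]
    | succ i ih =>
      have hmem : p i.succ ∈ (ball G hloc v (i : ℕ)).biUnion (fun x => (hloc x).toFinset) :=
        Finset.mem_biUnion.mpr ⟨p i.castSucc, by simpa using ih,
          (hloc _).mem_toFinset.mpr ((G.mem_neighborSet _ _).mpr (hadj i))⟩
      have hsucc : p i.succ ∈ ball G hloc v ((i : ℕ) + 1) := by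
        rw [show ball G hloc v ((i : ℕ) + 1)
            = (ball G hloc v (i : ℕ)) ∪ (ball G hloc v (i : ℕ)).biUnion
              (fun x => (hloc x).toFinset) from rfl]
        exact Finset.mem_union_right _ hmem
      simpa [Fin.val_succ] using hsucc
  intro i
  exact ball_mono G v hloc (Nat.lt_succ_iff.mp i.isLt) (key i)

lemma term_lt_top (hdpos : ∀ x, 0 < deg G x) {t : ℕ} (p : Fin (t+1) → V) :
    (if p 0 = v ∧ p (Fin.last t) = v ∧
      (∀ i : Fin (t+1), i ≠ 0 → i ≠ Fin.last t → p i ≠ v) then pathE G p else 0) < ⊤ := by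
  by_cases hc : p 0 = v ∧ p (Fin.last t) = v ∧
      (∀ i : Fin (t+1), i ≠ 0 → i ≠ Fin.last t → p i ≠ v)
  · rw [if_pos hc, pathE]
    by_cases hadj : ∀ i : Fin t, G.Adj (p i.castSucc) (p i.succ)
    · rw [if_pos hadj]
      refine ENNReal.prod_lt_top fun i _ => ?_
      rw [ENNReal.inv_lt_top]
      exact_mod_cast hdpos (p i.castSucc)
    · rw [if_neg hadj]
      exact ENNReal.zero_lt_top
  · rw [if_neg hc]
    exact ENNReal.zero_lt_top

lemma support_zero (hloc : LocFin G) {t : ℕ} {M : Type*} [Zero M] (w : ∀ p : Fin (t+1) → V, M)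
    (hw : ∀ p, (¬ ∀ i : Fin t, G.Adj (p i.castSucc) (p i.succ)) → w p = 0)
    (p : Fin (t+1) → V) (hp : p ∉ Fintype.piFinset (fun _ : Fin (t+1) => ball G hloc v t)) :
    (if p 0 = v ∧ p (Fin.last t) = v ∧
      (∀ i : Fin (t+1), i ≠ 0 → i ≠ Fin.last t → p i ≠ v) then w p else 0) = 0 := by
  by_cases hc : p 0 = v ∧ p (Fin.last t) = v ∧
      (∀ i : Fin (t+1), i ≠ 0 → i ≠ Fin.last t → p i ≠ v)
  · rw [if_pos hc]
    by_cases hadj : ∀ i : Fin t, G.Adj (p i.castSucc) (p i.succ)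
    · exact absurd (Fintype.mem_piFinset.mpr
        (mem_ball_of_path G v hloc p hc.1 hadj)) hp
    · exact hw p hadj
  · rw [if_neg hc]

lemma hitE_ne_top (hloc : LocFin G) (hdpos : ∀ x, 0 < deg G x) (t : ℕ) :
    hitE G v t ≠ ⊤ := by
  rw [hitE, tsum_eq_sum (support_zero G v hloc (fun p => pathE G p)
    (fun p hadj => by show pathE G p = 0; rw [pathE, if_neg hadj]))]
  exact (ENNReal.sum_lt_top.mpr fun p _ => term_lt_top G v hdpos p).ne

lemma hitProb_eq_toReal (hloc : LocFin G) (hdpos : ∀ x, 0 < deg G x) (t : ℕ) :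
    hitProb G v v t = (hitE G v t).toReal := by
  rw [hitProb, hitE,
    tsum_eq_sum (support_zero G v hloc (fun p => pathProb G p)
      (fun p hadj => by show pathProb G p = 0; rw [pathProb, if_neg hadj])),
    tsum_eq_sum (support_zero G v hloc (fun p => pathE G p)
      (fun p hadj => by show pathE G p = 0; rw [pathE, if_neg hadj])),
    ENNReal.toReal_sum (fun p _ => (term_lt_top G v hdpos p).ne)]
  refine Finset.sum_congr rfl fun p _ => ?_
  by_cases hc : p 0 = v ∧ p (Fin.last t) = v ∧
      (∀ i : Fin (t+1), i ≠ 0 → i ≠ Fin.last t → p i ≠ v)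
  · rw [if_pos hc, if_pos hc]
    simp only [pathProb, pathE]
    by_cases hadj : ∀ i : Fin t, G.Adj (p i.castSucc) (p i.succ)
    · rw [if_pos hadj, if_pos hadj, ENNReal.toReal_prod]
      refine Finset.prod_congr rfl fun i _ => ?_
      rw [ENNReal.toReal_inv, ENNReal.toReal_natCast]
    · rw [if_neg hadj, if_neg hadj, ENNReal.toReal_zero]
  · rw [if_neg hc, if_neg hc, ENNReal.toReal_zero]

end Aux6
open scoped ENNReal in
/-- For odd `t ≥ 3`, `P_v(τ_v = t) ≤ P_v(τ_v = t - 1)`. -/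
theorem odd_return_prob_le_even {V : Type} (G : SimpleGraph V) (hloc : LocFin G)
    (hconn : G.Connected) (hinf : Infinite V) (v : V) :
    ∀ t : ℕ, 3 ≤ t → Odd t → hitProb G v v t ≤ hitProb G v v (t - 1) := by
  intro t ht hodd
  haveI := hinf
  haveI : Nontrivial V := inferInstance
  obtain ⟨k, rfl⟩ : ∃ k, t = 2*k+3 := by
    obtain ⟨j, hj⟩ := hodd
    exact ⟨j - 1, by omega⟩
  have hdpos := deg_pos_s8 G hloc hconn
  have ht1 : 2*k+3-1 = 2*k+2 := by omega
  rw [ht1]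
  rw [hitProb_eq_toReal G v hloc hdpos (2*k+3), hitProb_eq_toReal G v hloc hdpos (2*k+2)]
  rw [ENNReal.toReal_le_toReal (hitE_ne_top G v hloc hdpos _) (hitE_ne_top G v hloc hdpos _)]
  have e1 : hitE G v (2*k+3) = ((deg G v : ℝ≥0∞))⁻¹ * ∑' a, fE G v (k+1) a * fE G v k a := by
    rw [show 2*k+3 = (2*k+1)+2 by omega, hitE_eq G v (2*k+1)]
    congr 1
    rw [show 2*k+1 = (k+1)+k by omega, shiftn G v k (k+1) 0, Nat.zero_add]
  have e2 : hitE G v (2*k+2) = ((deg G v : ℝ≥0∞))⁻¹ * ∑' a, fE G v k a * fE G v k a := by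
    rw [show 2*k+2 = (2*k)+2 by omega, hitE_eq G v (2*k)]
    congr 1
    rw [show 2*k = k+k by omega, shiftn G v k k 0, Nat.zero_add]
  rw [e1, e2]
  exact mul_le_mul_right (stepD G v hloc k) _

end RW
end
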